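/- arXiv:1009.4034 — 10 statements merged into one kernel-verified Lean document; each statement's English description precedes it below -/
import Mathlib

section
/- For every natural number m and every integer r ≥ 1, the sum over all r-tuples (m_1, …, m_r) of natural numbers with m_1 + ⋯ + m_r = m of the product C_{m_1} · C_{m_2} ⋯ C_{m_r} of Catalan numbers equals r · (2m+r−1)! / (m! · (m+r)!). -/
open Finset

private def S (r m : ℕ) : ℚ :=
  ∑ f ∈ Finset.Nat.antidiagonalTuple r m, ∏ i : Fin r, (catalan (f i) : ℚ)

private def Bq (r m : ℕ) : ℚ :=
  (r : ℚ) * (Nat.factorial (2 * m + r - 1) : ℚ) /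
    ((Nat.factorial m : ℚ) * (Nat.factorial (m + r) : ℚ))

private lemma sum_tuple_succ {M : Type*} [AddCommMonoid M] (k n : ℕ)
    (g : (Fin (k + 1) → ℕ) → M) :
    ∑ f ∈ Finset.Nat.antidiagonalTuple (k + 1) n, g f
      = ∑ ab ∈ Finset.HasAntidiagonal.antidiagonal n,
          ∑ f ∈ Finset.Nat.antidiagonalTuple k ab.2, g (Fin.cons ab.1 f) := by
  rw [Finset.sum_sigma']
  refine Finset.sum_nbij'
    (i := fun f => ⟨(f 0, ∑ i : Fin k, f i.succ), Fin.tail f⟩)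
    (j := fun p => Fin.cons p.1.1 p.2) ?_ ?_ ?_ ?_ ?_
  · intro f hf
    simp only [Finset.Nat.mem_antidiagonalTuple, Fin.sum_univ_succ] at hf
    simp only [Finset.mem_sigma, Finset.HasAntidiagonal.mem_antidiagonal,
      Finset.Nat.mem_antidiagonalTuple, Fin.tail]
    exact ⟨hf, trivial⟩
  · rintro ⟨⟨a, b⟩, f⟩ hp
    simp only [Finset.mem_sigma, Finset.HasAntidiagonal.mem_antidiagonal,
      Finset.Nat.mem_antidiagonalTuple] at hp ⊢
    rw [Fin.sum_univ_succ]
    simpa [hp.2] using hp.1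
  · intro f hf
    exact Fin.cons_self_tail f
  · rintro ⟨⟨a, b⟩, f⟩ hp
    simp only [Finset.mem_sigma, Finset.HasAntidiagonal.mem_antidiagonal,
      Finset.Nat.mem_antidiagonalTuple] at hp
    refine Sigma.ext ?_ (heq_of_eq ?_)
    · simp [Fin.tail, hp.2]
    · simp [Fin.tail]
  · intro f hf
    simp

private lemma S_succ (r m : ℕ) :
    S (r + 1) m = ∑ ab ∈ Finset.HasAntidiagonal.antidiagonal m, (catalan ab.1 : ℚ) * S r ab.2 := by
  rw [S, sum_tuple_succ]
  refine Finset.sum_congr rfl fun ab _ => ?_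
  rw [S, Finset.mul_sum]
  refine Finset.sum_congr rfl fun f _ => ?_
  rw [Fin.prod_univ_succ]
  simp

private lemma S_zero_right (r : ℕ) : S r 0 = 1 := by
  simp [S, Finset.Nat.antidiagonalTuple_zero_right]

private lemma S_one (m : ℕ) : S 1 m = (catalan m : ℚ) := by
  simp [S, Finset.Nat.antidiagonalTuple_one]

private lemma triple {M : Type*} [AddCommMonoid M] (n : ℕ) (F : ℕ → ℕ → ℕ → M) :
    ∑ ab ∈ Finset.HasAntidiagonal.antidiagonal n, ∑ cd ∈ Finset.HasAntidiagonal.antidiagonal ab.1, F cd.1 cd.2 ab.2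
      = ∑ ce ∈ Finset.HasAntidiagonal.antidiagonal n, ∑ db ∈ Finset.HasAntidiagonal.antidiagonal ce.2,
          F ce.1 db.1 db.2 := by
  rw [Finset.sum_sigma', Finset.sum_sigma']
  refine Finset.sum_nbij' (i := fun p => ⟨(p.2.1, p.2.2 + p.1.2), (p.2.2, p.1.2)⟩)
    (j := fun p => ⟨(p.1.1 + p.2.1, p.2.2), (p.1.1, p.2.1)⟩) ?_ ?_ ?_ ?_ ?_
  · rintro ⟨⟨a, b⟩, ⟨c, d⟩⟩ hp
    simp only [Finset.mem_sigma, Finset.HasAntidiagonal.mem_antidiagonal] at hp ⊢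
    exact ⟨by omega, trivial⟩
  · rintro ⟨⟨a, b⟩, ⟨c, d⟩⟩ hp
    simp only [Finset.mem_sigma, Finset.HasAntidiagonal.mem_antidiagonal] at hp ⊢
    exact ⟨by omega, trivial⟩
  · rintro ⟨⟨a, b⟩, ⟨c, d⟩⟩ hp
    simp only [Finset.mem_sigma, Finset.HasAntidiagonal.mem_antidiagonal] at hp
    obtain ⟨h1, h2⟩ := hp
    subst h2
    rfl
  · rintro ⟨⟨a, b⟩, ⟨c, d⟩⟩ hp
    simp only [Finset.mem_sigma, Finset.HasAntidiagonal.mem_antidiagonal] at hp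
    obtain ⟨h1, h2⟩ := hp
    subst h2
    rfl
  · rintro ⟨⟨a, b⟩, ⟨c, d⟩⟩ hp
    rfl

private lemma S_rec (r m : ℕ) : S (r + 1) (m + 1) = S r (m + 1) + S (r + 2) m := by
  rw [S_succ, Finset.Nat.antidiagonal_succ, Finset.sum_cons, Finset.sum_map]
  simp only [Function.Embedding.prodMap, Function.Embedding.coeFn_mk, Prod.map,
    Function.Embedding.refl_apply, catalan_zero, Nat.cast_one, one_mul]
  congr 1
  have : ∀ ab : ℕ × ℕ, (catalan (Nat.succ ab.1) : ℚ) * S r ab.2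
      = ∑ cd ∈ Finset.HasAntidiagonal.antidiagonal ab.1,
          (catalan cd.1 : ℚ) * ((catalan cd.2 : ℚ) * S r ab.2) := by
    intro ab
    rw [catalan_succ' ab.1]
    push_cast
    rw [Finset.sum_mul]
    refine Finset.sum_congr rfl fun cd _ => by ring
  rw [Finset.sum_congr rfl fun ab _ => this ab]
  rw [triple m (fun c d b => (catalan c : ℚ) * ((catalan d : ℚ) * S r b)), S_succ]
  refine Finset.sum_congr rfl fun ce _ => ?_
  rw [S_succ, Finset.mul_sum]

private lemma fact_pos_q (n : ℕ) : (0 : ℚ) < (Nat.factorial n : ℚ) := by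
  exact_mod_cast Nat.factorial_pos n

private lemma Bq_rec (r m : ℕ) : Bq (r + 1) (m + 1) = Bq r (m + 1) + Bq (r + 2) m := by
  have h1 : 2 * (m + 1) + (r + 1) - 1 = (2 * m + r + 1) + 1 := by omega
  have h2 : 2 * (m + 1) + r - 1 = 2 * m + r + 1 := by omega
  have h3 : 2 * m + (r + 2) - 1 = 2 * m + r + 1 := by omega
  rw [Bq, Bq, Bq, h1, h2, h3]
  have e1 : (m + 1) + (r + 1) = (m + (r + 1)) + 1 := by ring
  have e2 : m + (r + 2) = (m + (r + 1)) + 1 := by ring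
  have e3 : m + 1 + r = m + (r + 1) := by ring
  rw [e1, e2, e3, Nat.factorial_succ ((2 * m + r + 1)), Nat.factorial_succ (m + (r + 1)),
    Nat.factorial_succ m]
  have hf1 := (fact_pos_q (2 * m + r + 1)).ne'
  have hf2 := (fact_pos_q (m + (r + 1))).ne'
  have hf3 := (fact_pos_q m).ne'
  push_cast
  field_simp
  ring

private lemma main : ∀ m r : ℕ, S (r + 1) m = Bq (r + 1) m := by
  intro m
  induction m with
  | zero =>
    intro r
    rw [S_zero_right, Bq]
    have : 2 * 0 + (r + 1) - 1 = r := by omega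
    rw [this, show (0 + (r + 1)) = r + 1 from by omega, Nat.factorial_zero, Nat.factorial_succ]
    have hf := (fact_pos_q r).ne'
    push_cast
    field_simp
  | succ m ih =>
    intro r
    induction r with
    | zero =>
      rw [S_one, Bq, catalan_eq_centralBinom_div, Nat.centralBinom]
      have hd : (m + 1 + 1) ∣ (2 * (m + 1)).choose (m + 1) := Nat.succ_dvd_centralBinom (m + 1)
      rw [Nat.cast_div hd (by exact_mod_cast Nat.succ_ne_zero (m + 1))]
      rw [Nat.cast_choose ℚ (by omega)]
      have : 2 * (m + 1) - (m + 1) = m + 1 := by omega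
      rw [this]
      have h1 : 2 * (m + 1) + (0 + 1) - 1 = 2 * (m + 1) := by omega
      rw [h1]
      have e : m + 1 + (0 + 1) = (m + 1) + 1 := by omega
      rw [e, Nat.factorial_succ (m + 1)]
      have hf1 := (fact_pos_q (m + 1)).ne'
      have hm2 : ((m : ℚ) + 1 + 1) ≠ 0 := by positivity
      push_cast
      field_simp
      try exact Or.inl trivial
    | succ r ihr =>
      rw [S_rec, ihr, ih (r + 2)]
      exact (Bq_rec (r + 1) m).symm

theorem stmt_1 (m r : ℕ) (hr : 1 ≤ r) :
    (∑ f ∈ Finset.Nat.antidiagonalTuple r m, ∏ i : Fin r, (catalan (f i) : ℚ))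
    = (r : ℚ) * (Nat.factorial (2 * m + r - 1) : ℚ) /
        ((Nat.factorial m : ℚ) * (Nat.factorial (m + r) : ℚ)) := by
  obtain ⟨r', rfl⟩ := Nat.exists_eq_succ_of_ne_zero (by omega : r ≠ 0)
  exact main m r'
end

section
/- For every real number c with 0 ≤ c ≤ 1, ∫_{c−2}^{c+2} √(4−(s−c)²)/(2π(1+cs)) ds = 1. -/
set_option maxHeartbeats 1000000

open Real Set intervalIntegral MeasureTheory

lemma sqrt_four : Real.sqrt 4 = 2 := by
  rw [show (4:ℝ) = 2^2 by norm_num, Real.sqrt_sq (by norm_num)]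

-- derivative of inner quadratic
lemma hasDerivAt_quad (c s : ℝ) :
    HasDerivAt (fun s : ℝ => 4 - (s - c) ^ 2) (-(2 * (s - c))) s := by
  have h := (((hasDerivAt_id s).sub_const c).pow 2).const_sub 4
  exact h.congr_deriv (by simp)

lemma case_c1 :
    (∫ s in ((1:ℝ) - 2)..(1 + 2), Real.sqrt (4 - (s - 1) ^ 2) / (2 * Real.pi * (1 + 1 * s))) = 1 := by
  have hlo : (1:ℝ) - 2 = -1 := by norm_num
  have hhi : (1:ℝ) + 2 = 3 := by norm_num
  rw [hlo, hhi]
  set f : ℝ → ℝ := fun s => Real.sqrt (4 - (s - 1) ^ 2) / (2 * Real.pi * (1 + 1 * s)) with hf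
  set F : ℝ → ℝ := fun s => (2 * Real.arcsin ((s - 1) / 2) + Real.sqrt (4 - (s - 1) ^ 2)) / (2 * Real.pi) with hF
  have hπ : (0:ℝ) < Real.pi := Real.pi_pos
  have key : ∫ s in (-1:ℝ)..3, f s = F 3 - F (-1) := by
    apply intervalIntegral.integral_eq_sub_of_hasDeriv_right_of_le (by norm_num)
    · -- continuity of F
      apply Continuous.continuousOn
      apply Continuous.div_const
      exact (by continuity : Continuous fun s : ℝ => 2 * Real.arcsin ((s - 1) / 2)).add
        (Real.continuous_sqrt.comp (by continuity))
    · -- derivative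
      intro s hs
      obtain ⟨hs1, hs3⟩ := hs
      have hD : 0 < 4 - (s - 1) ^ 2 := by nlinarith
      have hR : 0 < Real.sqrt (4 - (s - 1) ^ 2) := Real.sqrt_pos.mpr hD
      have hsq : Real.sqrt (4 - (s - 1) ^ 2) ^ 2 = 4 - (s - 1) ^ 2 := Real.sq_sqrt hD.le
      have hP : 0 < 1 + s := by linarith
      have ha : HasDerivAt (fun s : ℝ => Real.arcsin ((s - 1) / 2))
          ((1 / Real.sqrt (1 - ((s - 1) / 2) ^ 2)) * (1 / 2)) s := by
        have hin : HasDerivAt (fun s : ℝ => (s - 1) / 2) (1 / 2) s := by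
          simpa using ((hasDerivAt_id s).sub_const 1).div_const 2
        exact (Real.hasDerivAt_arcsin (by nlinarith) (by nlinarith)).comp s hin
      have hb : HasDerivAt (fun s : ℝ => Real.sqrt (4 - (s - 1) ^ 2))
          ((1 / (2 * Real.sqrt (4 - (s - 1) ^ 2))) * (-(2 * (s - 1)))) s :=
        (Real.hasDerivAt_sqrt hD.ne').comp s (hasDerivAt_quad 1 s)
      have hFd : HasDerivAt F
          (((1 / Real.sqrt (1 - ((s - 1) / 2) ^ 2)) * (1 / 2) * 2 +
            (1 / (2 * Real.sqrt (4 - (s - 1) ^ 2))) * (-(2 * (s - 1)))) / (2 * Real.pi)) s := by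
        have := ((ha.const_mul 2).add hb).div_const (2 * Real.pi)
        exact this.congr_deriv (by ring)
      have he : Real.sqrt (1 - ((s - 1) / 2) ^ 2) = Real.sqrt (4 - (s - 1) ^ 2) / 2 := by
        rw [show (1 : ℝ) - ((s - 1) / 2) ^ 2 = (4 - (s - 1) ^ 2) / 4 by ring,
          Real.sqrt_div hD.le, sqrt_four]
      have : f s = ((1 / Real.sqrt (1 - ((s - 1) / 2) ^ 2)) * (1 / 2) * 2 +
            (1 / (2 * Real.sqrt (4 - (s - 1) ^ 2))) * (-(2 * (s - 1)))) / (2 * Real.pi) := by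
        rw [he, hf]
        field_simp
        linear_combination hsq
      rw [this]
      exact hFd.hasDerivWithinAt
    · -- integrability
      have hmeas : AEStronglyMeasurable f (volume.restrict (Set.uIoc (-1:ℝ) 3)) := by
        apply Measurable.aestronglyMeasurable
        exact (Real.continuous_sqrt.comp (by continuity : Continuous fun s : ℝ => 4 - (s - 1) ^ 2)).measurable.div
          (by continuity : Continuous fun s : ℝ => 2 * Real.pi * (1 + 1 * s)).measurable
      have h0 : IntervalIntegrable (fun x : ℝ => x ^ (-(1/2) : ℝ)) volume 0 4 :=
        intervalIntegral.intervalIntegrable_rpow' (by norm_num)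
      have h1 := (h0.comp_sub_right (-1)).const_mul (1 / Real.pi)
      have h2 : IntervalIntegrable (fun x : ℝ => 1 / Real.pi * (x + 1) ^ (-(1/2) : ℝ)) volume (-1) 3 := by
        have e : (0:ℝ) + -1 = -1 := by norm_num
        have e' : (4:ℝ) + -1 = 3 := by norm_num
        rw [e, e'] at h1
        convert h1 using 2 with x
        ring_nf
      apply h2.mono_fun hmeas
      filter_upwards [MeasureTheory.ae_restrict_mem measurableSet_uIoc] with x hx
      have hx' : x ∈ Set.Ioc (-1:ℝ) 3 := by rwa [Set.uIoc_of_le (by norm_num)] at hx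
      have h1x : 0 < x + 1 := by linarith [hx'.1]
      have hsx : 0 < Real.sqrt (x + 1) := Real.sqrt_pos.mpr h1x
      have hss : Real.sqrt (x + 1) * Real.sqrt (x + 1) = x + 1 := Real.mul_self_sqrt h1x.le
      have hgx : (1 / Real.pi) * (x + 1) ^ (-(1/2) : ℝ) = 1 / (Real.pi * Real.sqrt (x + 1)) := by
        rw [Real.rpow_neg h1x.le, ← Real.sqrt_eq_rpow]
        field_simp
      have hfx : 0 ≤ f x := by
        apply div_nonneg (Real.sqrt_nonneg _)
        have : 0 < 1 + 1 * x := by linarith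
        positivity
      have hb : Real.sqrt (4 - (x - 1) ^ 2) ≤ 2 * Real.sqrt (x + 1) := by
        rw [show (2:ℝ) = Real.sqrt 4 from sqrt_four.symm, ← Real.sqrt_mul (by norm_num)]
        apply Real.sqrt_le_sqrt
        nlinarith [hx'.1, hx'.2]
      have hgoal : f x ≤ 1 / Real.pi * (x + 1) ^ (-(1/2) : ℝ) := by
        rw [hgx, hf]
        have hd : 0 < 2 * Real.pi * (1 + 1 * x) := by
          have : 0 < 1 + 1 * x := by linarith
          positivity
        rw [div_le_div_iff₀ hd (by positivity)]
        calc Real.sqrt (4 - (x - 1) ^ 2) * (Real.pi * Real.sqrt (x + 1))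
            ≤ 2 * Real.sqrt (x + 1) * (Real.pi * Real.sqrt (x + 1)) := by
              apply mul_le_mul_of_nonneg_right hb (by positivity)
          _ = 1 * (2 * Real.pi * (1 + 1 * x)) := by
              rw [show 2 * Real.sqrt (x+1) * (Real.pi * Real.sqrt (x+1)) = 2 * Real.pi * (Real.sqrt (x+1) * Real.sqrt (x+1)) by ring, hss]
              ring
      rw [Real.norm_of_nonneg hfx, Real.norm_of_nonneg (by positivity)]
      exact hgoal
  rw [key, hF]
  have h1 : Real.arcsin ((3 - 1) / 2) = Real.pi / 2 := by norm_num [Real.arcsin_one]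
  have h2 : Real.arcsin ((-1 - 1 : ℝ) / 2) = -(Real.pi / 2) := by norm_num [Real.arcsin_neg_one]
  simp only
  rw [h1, h2]
  have : Real.sqrt (4 - ((3:ℝ) - 1) ^ 2) = 0 := by norm_num
  rw [this]
  have : Real.sqrt (4 - ((-1:ℝ) - 1) ^ 2) = 0 := by norm_num
  rw [this]
  field_simp
  ring


lemma case_c0 :
    (∫ s in ((0:ℝ) - 2)..(0 + 2), Real.sqrt (4 - (s - 0) ^ 2) / (2 * Real.pi * (1 + 0 * s))) = 1 := by
  have hlo : (0:ℝ) - 2 = -2 := by norm_num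
  have hhi : (0:ℝ) + 2 = 2 := by norm_num
  rw [hlo, hhi]
  set f : ℝ → ℝ := fun s => Real.sqrt (4 - (s - 0) ^ 2) / (2 * Real.pi * (1 + 0 * s)) with hf
  set F : ℝ → ℝ := fun s => (2 * Real.arcsin (s / 2) + s * Real.sqrt (4 - s ^ 2) / 2) / (2 * Real.pi) with hF
  have hπ : (0:ℝ) < Real.pi := Real.pi_pos
  have key : ∫ s in (-2:ℝ)..2, f s = F 2 - F (-2) := by
    apply intervalIntegral.integral_eq_sub_of_hasDeriv_right_of_le (by norm_num)
    · apply Continuous.continuousOn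
      apply Continuous.div_const
      exact (by continuity : Continuous fun s : ℝ => 2 * Real.arcsin (s / 2)).add
        (by continuity : Continuous fun s : ℝ => s * Real.sqrt (4 - s ^ 2) / 2)
    · intro s hs
      obtain ⟨hs1, hs2⟩ := hs
      have hD : 0 < 4 - s ^ 2 := by nlinarith
      have hR : 0 < Real.sqrt (4 - s ^ 2) := Real.sqrt_pos.mpr hD
      have hsq : Real.sqrt (4 - s ^ 2) ^ 2 = 4 - s ^ 2 := Real.sq_sqrt hD.le
      have ha : HasDerivAt (fun s : ℝ => Real.arcsin (s / 2))
          ((1 / Real.sqrt (1 - (s / 2) ^ 2)) * (1 / 2)) s := by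
        have hin : HasDerivAt (fun s : ℝ => s / 2) (1 / 2) s := by
          simpa using (hasDerivAt_id s).div_const 2
        exact (Real.hasDerivAt_arcsin (by nlinarith) (by nlinarith)).comp s hin
      have hb : HasDerivAt (fun s : ℝ => Real.sqrt (4 - s ^ 2))
          ((1 / (2 * Real.sqrt (4 - s ^ 2))) * (-(2 * s))) s := by
        have hq : HasDerivAt (fun s : ℝ => 4 - s ^ 2) (-(2 * s)) s := by
          have := (hasDerivAt_quad 0 s)
          simpa using this
        exact (Real.hasDerivAt_sqrt hD.ne').comp s hq
      have hc : HasDerivAt (fun s : ℝ => s * Real.sqrt (4 - s ^ 2))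
          (1 * Real.sqrt (4 - s ^ 2) + s * ((1 / (2 * Real.sqrt (4 - s ^ 2))) * (-(2 * s)))) s :=
        (hasDerivAt_id s).mul hb
      have hFd : HasDerivAt F
          (((1 / Real.sqrt (1 - (s / 2) ^ 2)) * (1 / 2) * 2 +
            (1 * Real.sqrt (4 - s ^ 2) + s * ((1 / (2 * Real.sqrt (4 - s ^ 2))) * (-(2 * s)))) / 2) / (2 * Real.pi)) s := by
        have := ((ha.const_mul 2).add (hc.div_const 2)).div_const (2 * Real.pi)
        exact this.congr_deriv (by ring)
      have he : Real.sqrt (1 - (s / 2) ^ 2) = Real.sqrt (4 - s ^ 2) / 2 := by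
        rw [show (1 : ℝ) - (s / 2) ^ 2 = (4 - s ^ 2) / 4 by ring, Real.sqrt_div hD.le, sqrt_four]
      have : f s = ((1 / Real.sqrt (1 - (s / 2) ^ 2)) * (1 / 2) * 2 +
            (1 * Real.sqrt (4 - s ^ 2) + s * ((1 / (2 * Real.sqrt (4 - s ^ 2))) * (-(2 * s)))) / 2) / (2 * Real.pi) := by
        rw [he, hf]
        show Real.sqrt (4 - (s - 0) ^ 2) / (2 * Real.pi * (1 + 0 * s)) = _
        rw [show (s:ℝ) - 0 = s by ring, show (1:ℝ) + 0 * s = 1 by ring]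
        field_simp
        linear_combination hsq
      rw [this]
      exact hFd.hasDerivWithinAt
    · apply ContinuousOn.intervalIntegrable
      apply ContinuousOn.div
      · exact (Real.continuous_sqrt.comp (by continuity)).continuousOn
      · exact (by continuity : Continuous fun s : ℝ => 2 * Real.pi * (1 + 0 * s)).continuousOn
      · intro s _
        simp only [zero_mul, add_zero, mul_one]
        positivity
  rw [key, hF]
  simp only
  rw [show ((2:ℝ) / 2) = 1 by norm_num, show ((-2:ℝ) / 2) = -1 by norm_num,
    Real.arcsin_one, Real.arcsin_neg_one]
  rw [show (4:ℝ) - 2 ^ 2 = 0 by norm_num, show (4:ℝ) - (-2) ^ 2 = 0 by norm_num, Real.sqrt_zero]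
  field_simp
  ring

lemma case_mid (c : ℝ) (h0 : 0 < c) (h1 : c < 1) :
    (∫ s in (c - 2)..(c + 2), Real.sqrt (4 - (s - c) ^ 2) / (2 * Real.pi * (1 + c * s))) = 1 := by
  have hπ : (0:ℝ) < Real.pi := Real.pi_pos
  have hc2 : 0 < 1 - c ^ 2 := by nlinarith
  set f : ℝ → ℝ := fun s => Real.sqrt (4 - (s - c) ^ 2) / (2 * Real.pi * (1 + c * s)) with hf
  set F : ℝ → ℝ := fun s =>
      ((1 + c ^ 2) / c ^ 2 * Real.arcsin ((s - c) / 2) + Real.sqrt (4 - (s - c) ^ 2) / c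
        - (1 - c ^ 2) / c ^ 2 * Real.arcsin ((4 * c + (1 + c ^ 2) * (s - c)) / (2 * (1 + c * s))))
        / (2 * Real.pi) with hF
  have hPpos : ∀ s ∈ Set.Icc (c - 2) (c + 2), 0 < 1 + c * s := by
    intro s hs
    nlinarith [hs.1, hs.2]
  have key : ∫ s in (c - 2)..(c + 2), f s = F (c + 2) - F (c - 2) := by
    apply intervalIntegral.integral_eq_sub_of_hasDeriv_right_of_le (by linarith)
    · -- continuity of F
      apply ContinuousOn.div_const
      apply ContinuousOn.sub
      · exact (by continuity : Continuous fun s : ℝ =>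
          (1 + c ^ 2) / c ^ 2 * Real.arcsin ((s - c) / 2) + Real.sqrt (4 - (s - c) ^ 2) / c).continuousOn
      · apply ContinuousOn.mul continuousOn_const
        apply Real.continuous_arcsin.comp_continuousOn
        apply ContinuousOn.div
        · exact (by continuity : Continuous fun s : ℝ => 4 * c + (1 + c ^ 2) * (s - c)).continuousOn
        · exact (by continuity : Continuous fun s : ℝ => 2 * (1 + c * s)).continuousOn
        · intro s hs
          have := hPpos s hs
          positivity
    · -- derivative
      intro s hs
      obtain ⟨hs1, hs2⟩ := hs
      have hD : 0 < 4 - (s - c) ^ 2 := by nlinarith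
      have hR : 0 < Real.sqrt (4 - (s - c) ^ 2) := Real.sqrt_pos.mpr hD
      have hsq : Real.sqrt (4 - (s - c) ^ 2) ^ 2 = 4 - (s - c) ^ 2 := Real.sq_sqrt hD.le
      have hP : 0 < 1 + c * s := hPpos s ⟨hs1.le, hs2.le⟩
      -- key polynomial identity
      have hkey : 4 * (1 + c * s) ^ 2 - (4 * c + (1 + c ^ 2) * (s - c)) ^ 2
          = (1 - c ^ 2) ^ 2 * (4 - (s - c) ^ 2) := by ring
      have hu2 : 1 - ((4 * c + (1 + c ^ 2) * (s - c)) / (2 * (1 + c * s))) ^ 2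
          = (1 - c ^ 2) ^ 2 * (4 - (s - c) ^ 2) / (4 * (1 + c * s) ^ 2) := by
        field_simp
        linear_combination hkey
      have hu2pos : 0 < 1 - ((4 * c + (1 + c ^ 2) * (s - c)) / (2 * (1 + c * s))) ^ 2 := by
        rw [hu2]; positivity
      have hune1 : (4 * c + (1 + c ^ 2) * (s - c)) / (2 * (1 + c * s)) ≠ 1 := by
        intro h; rw [h] at hu2pos; norm_num at hu2pos
      have hune2 : (4 * c + (1 + c ^ 2) * (s - c)) / (2 * (1 + c * s)) ≠ -1 := by
        intro h; rw [h] at hu2pos; norm_num at hu2pos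
      have he2 : Real.sqrt (1 - ((4 * c + (1 + c ^ 2) * (s - c)) / (2 * (1 + c * s))) ^ 2)
          = (1 - c ^ 2) * Real.sqrt (4 - (s - c) ^ 2) / (2 * (1 + c * s)) := by
        rw [hu2, show (1 - c ^ 2) ^ 2 * (4 - (s - c) ^ 2) / (4 * (1 + c * s) ^ 2)
            = ((1 - c ^ 2) * Real.sqrt (4 - (s - c) ^ 2) / (2 * (1 + c * s))) ^ 2 by
          field_simp
          linear_combination (-(4:ℝ)) * hsq]
        exact Real.sqrt_sq (by positivity)
      have ha : HasDerivAt (fun s : ℝ => Real.arcsin ((s - c) / 2))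
          ((1 / Real.sqrt (1 - ((s - c) / 2) ^ 2)) * (1 / 2)) s := by
        have hin : HasDerivAt (fun s : ℝ => (s - c) / 2) (1 / 2) s := by
          simpa using ((hasDerivAt_id s).sub_const c).div_const 2
        exact (Real.hasDerivAt_arcsin (by nlinarith) (by nlinarith)).comp s hin
      have hb : HasDerivAt (fun s : ℝ => Real.sqrt (4 - (s - c) ^ 2))
          ((1 / (2 * Real.sqrt (4 - (s - c) ^ 2))) * (-(2 * (s - c)))) s :=
        (Real.hasDerivAt_sqrt hD.ne').comp s (hasDerivAt_quad c s)
      have hN : HasDerivAt (fun s : ℝ => 4 * c + (1 + c ^ 2) * (s - c)) (1 + c ^ 2) s := by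
        simpa using ((((hasDerivAt_id s).sub_const c).const_mul (1 + c ^ 2)).const_add (4 * c))
      have hM : HasDerivAt (fun s : ℝ => 2 * (1 + c * s)) (2 * c) s := by
        have := (((hasDerivAt_id s).const_mul c).const_add 1).const_mul 2
        simpa using this
      have hMne : (2 : ℝ) * (1 + c * s) ≠ 0 := by positivity
      have hu : HasDerivAt (fun s : ℝ => (4 * c + (1 + c ^ 2) * (s - c)) / (2 * (1 + c * s)))
          (((1 + c ^ 2) * (2 * (1 + c * s)) - (4 * c + (1 + c ^ 2) * (s - c)) * (2 * c))
            / (2 * (1 + c * s)) ^ 2) s := hN.div hM hMne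
      have hau : HasDerivAt (fun s : ℝ =>
          Real.arcsin ((4 * c + (1 + c ^ 2) * (s - c)) / (2 * (1 + c * s))))
          ((1 / Real.sqrt (1 - ((4 * c + (1 + c ^ 2) * (s - c)) / (2 * (1 + c * s))) ^ 2)) *
            (((1 + c ^ 2) * (2 * (1 + c * s)) - (4 * c + (1 + c ^ 2) * (s - c)) * (2 * c))
              / (2 * (1 + c * s)) ^ 2)) s :=
        by have := (Real.hasDerivAt_arcsin hune2 hune1).comp s hu; exact this
      have he : Real.sqrt (1 - ((s - c) / 2) ^ 2) = Real.sqrt (4 - (s - c) ^ 2) / 2 := by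
        rw [show (1 : ℝ) - ((s - c) / 2) ^ 2 = (4 - (s - c) ^ 2) / 4 by ring,
          Real.sqrt_div hD.le, sqrt_four]
      have hFd := (((ha.const_mul ((1 + c ^ 2) / c ^ 2)).add (hb.div_const c)).sub
          (hau.const_mul ((1 - c ^ 2) / c ^ 2))).div_const (2 * Real.pi)
      have heq : f s = ((1 + c ^ 2) / c ^ 2 * ((1 / Real.sqrt (1 - ((s - c) / 2) ^ 2)) * (1 / 2)) +
          (1 / (2 * Real.sqrt (4 - (s - c) ^ 2))) * (-(2 * (s - c))) / c -
          (1 - c ^ 2) / c ^ 2 *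
            ((1 / Real.sqrt (1 - ((4 * c + (1 + c ^ 2) * (s - c)) / (2 * (1 + c * s))) ^ 2)) *
              (((1 + c ^ 2) * (2 * (1 + c * s)) - (4 * c + (1 + c ^ 2) * (s - c)) * (2 * c))
                / (2 * (1 + c * s)) ^ 2))) / (2 * Real.pi) := by
        have hnum : (1 + c ^ 2) * (2 * (1 + c * s)) - (4 * c + (1 + c ^ 2) * (s - c)) * (2 * c)
            = 2 * (1 - c ^ 2) ^ 2 := by ring
        rw [hnum, he, he2, hf]
        field_simp
        rw [hsq]
        field_simp
        ring
      rw [heq]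
      exact hFd.hasDerivWithinAt
    · -- integrability
      apply ContinuousOn.intervalIntegrable
      rw [Set.uIcc_of_le (by linarith)]
      apply ContinuousOn.div
      · exact (Real.continuous_sqrt.comp (by continuity)).continuousOn
      · exact (by continuity : Continuous fun s : ℝ => 2 * Real.pi * (1 + c * s)).continuousOn
      · intro s hs
        have := hPpos s hs
        positivity
  rw [key, hF]
  simp only
  have e1 : ((c + 2 - c) / 2 : ℝ) = 1 := by ring
  have e2 : ((c - 2 - c) / 2 : ℝ) = -1 := by ring
  have e3 : (4 : ℝ) - (c + 2 - c) ^ 2 = 0 := by ring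
  have e4 : (4 : ℝ) - (c - 2 - c) ^ 2 = 0 := by ring
  have hden1 : (2 : ℝ) * (1 + c * (c + 2)) ≠ 0 := by nlinarith
  have hden2 : (2 : ℝ) * (1 + c * (c - 2)) ≠ 0 := by nlinarith
  have e5 : (4 * c + (1 + c ^ 2) * (c + 2 - c)) / (2 * (1 + c * (c + 2))) = 1 := by
    rw [div_eq_one_iff_eq hden1]; ring
  have e6 : (4 * c + (1 + c ^ 2) * (c - 2 - c)) / (2 * (1 + c * (c - 2))) = -1 := by
    rw [div_eq_iff hden2]; ring
  rw [e1, e2, e3, e4, e5, e6, Real.arcsin_one, Real.arcsin_neg_one, Real.sqrt_zero]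
  field_simp
  ring

theorem stmt_6 (c : ℝ) (hc0 : 0 ≤ c) (hc1 : c ≤ 1) :
    (∫ s in (c - 2)..(c + 2), Real.sqrt (4 - (s - c) ^ 2) / (2 * Real.pi * (1 + c * s))) = 1 := by
  rcases hc0.eq_or_lt with h0 | h0
  · rw [← h0]
    exact case_c0
  rcases eq_or_lt_of_le hc1 with h1 | h1
  · rw [h1]
    exact case_c1
  exact case_mid c h0 h1
end

section
/- For every real number c > 1, ∫_{c−2}^{c+2} √(4−(s−c)²)/(2π(1+cs)) ds = 1/c². -/
set_option maxHeartbeats 1000000 in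
theorem stmt_7 (c : ℝ) (hc : 1 < c) :
    (∫ s in (c - 2)..(c + 2), Real.sqrt (4 - (s - c) ^ 2) / (2 * Real.pi * (1 + c * s)))
    = 1 / c ^ 2 := by
  have hc0 : (0:ℝ) < c := lt_trans one_pos hc
  have hc2 : (0:ℝ) < c ^ 2 - 1 := by nlinarith
  have hπ := Real.pi_pos
  have hab : c - 2 ≤ c + 2 := by linarith
  have hP : ∀ x ∈ Set.Icc (c - 2) (c + 2), 0 < 1 + c * x := by
    intro x hx
    nlinarith [hx.1, hx.2]
  set F : ℝ → ℝ := fun s =>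
    ((1 + c ^ 2) * Real.arcsin ((s - c) / 2) + c * Real.sqrt (4 - (s - c) ^ 2)
      - (c ^ 2 - 1) * Real.arcsin ((4 * c + (1 + c ^ 2) * (s - c)) / (2 * (1 + c * s))))
      / (2 * Real.pi * c ^ 2) with hFdef
  have hcont : ContinuousOn F (Set.Icc (c - 2) (c + 2)) := by
    apply ContinuousOn.div_const
    apply ContinuousOn.sub
    · apply ContinuousOn.add
      · exact (continuous_const.mul (Real.continuous_arcsin.comp (by fun_prop))).continuousOn
      · exact (continuous_const.mul (Real.continuous_sqrt.comp (by continuity))).continuousOn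
    · apply ContinuousOn.mul continuousOn_const
      apply Real.continuous_arcsin.comp_continuousOn
      apply ContinuousOn.div (by fun_prop) (by fun_prop)
      intro x hx
      have := hP x hx
      intro h
      nlinarith
  have hderiv : ∀ x ∈ Set.Ioo (c - 2) (c + 2),
      HasDerivAt F (Real.sqrt (4 - (x - c) ^ 2) / (2 * Real.pi * (1 + c * x))) x := by
    intro x hx
    have ht1 : -2 < x - c := by linarith [hx.1]
    have ht2 : x - c < 2 := by linarith [hx.2]
    have hQ : 0 < 4 - (x - c) ^ 2 := by nlinarith
    have hPx : 0 < 1 + c * x := hP x ⟨le_of_lt hx.1, le_of_lt hx.2⟩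
    set D := Real.sqrt (4 - (x - c) ^ 2) with hDdef
    have hD0 : 0 < D := Real.sqrt_pos.mpr hQ
    have hD2 : D ^ 2 = 4 - (x - c) ^ 2 := Real.sq_sqrt hQ.le
    -- sqrt(1 - ((x-c)/2)^2) = D/2
    have hs1 : Real.sqrt (1 - ((x - c) / 2) ^ 2) = D / 2 := by
      have h : 1 - ((x - c) / 2) ^ 2 = (D / 2) ^ 2 := by
        rw [div_pow, div_pow, hD2]; ring
      rw [h, Real.sqrt_sq (by positivity)]
    -- piece 1 : arcsin((s-c)/2)
    have h1 : HasDerivAt (fun s : ℝ => Real.arcsin ((s - c) / 2)) (1 / D) x := by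
      have hin : HasDerivAt (fun s : ℝ => (s - c) / 2) (1 / 2) x := by
        simpa using ((hasDerivAt_id x).sub_const c).div_const 2
      have hne1 : (x - c) / 2 ≠ -1 := by intro h; nlinarith [h]
      have hne2 : (x - c) / 2 ≠ 1 := by intro h; nlinarith [h]
      have := (Real.hasDerivAt_arcsin hne1 hne2).comp x hin
      refine this.congr_deriv ?_
      rw [hs1]
      field_simp
    -- piece 2 : sqrt(4-(s-c)^2)
    have h2 : HasDerivAt (fun s : ℝ => Real.sqrt (4 - (s - c) ^ 2)) (-(x - c) / D) x := by
      have hin : HasDerivAt (fun s : ℝ => 4 - (s - c) ^ 2) (-(2 * (x - c))) x := by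
        have := (((hasDerivAt_id x).sub_const c).pow 2).const_sub 4
        simpa using this
      have := (Real.hasDerivAt_sqrt hQ.ne').comp x hin
      refine this.congr_deriv ?_
      rw [← hDdef]
      field_simp
    -- piece 3 : arcsin(u)
    set u : ℝ → ℝ := fun s => (4 * c + (1 + c ^ 2) * (s - c)) / (2 * (1 + c * s)) with hudef
    have hPne : (1 + c * x) ≠ 0 := hPx.ne'
    have hu2 : 1 - u x ^ 2 = ((c ^ 2 - 1) * D / (2 * (1 + c * x))) ^ 2 := by
      have hrw : ((c ^ 2 - 1) * D / (2 * (1 + c * x))) ^ 2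
          = (c ^ 2 - 1) ^ 2 * (4 - (x - c) ^ 2) / (4 * (1 + c * x) ^ 2) := by
        rw [div_pow, mul_pow, mul_pow, hD2]; ring
      rw [hrw, hudef]
      field_simp
      ring
    have hu2pos : 0 < 1 - u x ^ 2 := by
      rw [hu2]; positivity
    have hsu : Real.sqrt (1 - u x ^ 2) = (c ^ 2 - 1) * D / (2 * (1 + c * x)) := by
      rw [hu2, Real.sqrt_sq (by positivity)]
    have huderiv : HasDerivAt u ((c ^ 2 - 1) ^ 2 / (2 * (1 + c * x) ^ 2)) x := by
      have hnum : HasDerivAt (fun s : ℝ => 4 * c + (1 + c ^ 2) * (s - c)) (1 + c ^ 2) x := by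
        have := (((hasDerivAt_id x).sub_const c).const_mul (1 + c ^ 2)).const_add (4 * c)
        simpa using this
      have hden : HasDerivAt (fun s : ℝ => 2 * (1 + c * s)) (2 * c) x := by
        have := (((hasDerivAt_id x).const_mul c).const_add 1).const_mul 2
        simpa [mul_comm] using this
      have := hnum.div hden (by positivity)
      refine this.congr_deriv ?_
      field_simp
      ring
    have h3 : HasDerivAt (fun s : ℝ => Real.arcsin (u s))
        ((c ^ 2 - 1) / ((1 + c * x) * D)) x := by
      have hne1 : u x ≠ -1 := by
        intro h; rw [h] at hu2pos; norm_num at hu2pos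
      have hne2 : u x ≠ 1 := by
        intro h; rw [h] at hu2pos; norm_num at hu2pos
      have := (Real.hasDerivAt_arcsin hne1 hne2).comp x huderiv
      refine this.congr_deriv ?_
      rw [hsu]
      field_simp
    -- assemble
    have hN : HasDerivAt F
        (((1 + c ^ 2) * (1 / D) + c * (-(x - c) / D)
          - (c ^ 2 - 1) * ((c ^ 2 - 1) / ((1 + c * x) * D))) / (2 * Real.pi * c ^ 2)) x := by
      exact (((h1.const_mul (1 + c ^ 2)).add (h2.const_mul c)).sub
        (h3.const_mul (c ^ 2 - 1))).div_const (2 * Real.pi * c ^ 2)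
    have key : (1 + c ^ 2) * (1 / D) + c * (-(x - c) / D)
        - (c ^ 2 - 1) * ((c ^ 2 - 1) / ((1 + c * x) * D))
        = c ^ 2 * (4 - (x - c) ^ 2) / ((1 + c * x) * D) := by
      field_simp
      ring
    convert hN using 1
    rw [key, ← hD2]
    have hπne : Real.pi ≠ 0 := hπ.ne'
    field_simp
  have hint : IntervalIntegrable
      (fun s => Real.sqrt (4 - (s - c) ^ 2) / (2 * Real.pi * (1 + c * s)))
      MeasureTheory.volume (c - 2) (c + 2) := by
    apply ContinuousOn.intervalIntegrable
    rw [Set.uIcc_of_le hab]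
    apply ContinuousOn.div
    · exact (Real.continuous_sqrt.comp (by continuity)).continuousOn
    · fun_prop
    · intro x hx
      have := hP x hx
      intro h
      nlinarith
  rw [intervalIntegral.integral_eq_sub_of_hasDerivAt_of_le hab hcont hderiv hint]
  -- endpoint evaluation
  have e1 : (c + 2 - c) / 2 = 1 := by ring
  have e2 : (c - 2 - c) / 2 = -1 := by ring
  have e3 : (4 : ℝ) - (c + 2 - c) ^ 2 = 0 := by ring
  have e4 : (4 : ℝ) - (c - 2 - c) ^ 2 = 0 := by ring
  have hP1 : (0:ℝ) < 1 + c * (c + 2) := by nlinarith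
  have hP2 : (0:ℝ) < 1 + c * (c - 2) := by nlinarith
  have e5 : (4 * c + (1 + c ^ 2) * (c + 2 - c)) / (2 * (1 + c * (c + 2))) = 1 := by
    rw [div_eq_one_iff_eq (by positivity)]
    ring
  have e6 : (4 * c + (1 + c ^ 2) * (c - 2 - c)) / (2 * (1 + c * (c - 2))) = -1 := by
    rw [div_eq_iff (by positivity)]
    ring
  rw [hFdef]
  simp only [e1, e2, e3, e4, e5, e6, Real.sqrt_zero, Real.arcsin_one, Real.arcsin_neg_one]
  have hπne : Real.pi ≠ 0 := hπ.ne'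
  field_simp
  ring
end

section
/- Let 0 ≤ c ≤ 1 and let z be a real number with z > c + 2. Then ∫_{c−2}^{c+2} [√(4−(s−c)²)/(2π(1+cs))] / (z − s) ds = (c + z − √((z−c)² − 4)) / (2(1+cz)). -/
open Real MeasureTheory intervalIntegral Set

lemma sqrt_eval {x y : ℝ} (hy : 0 ≤ y) (h : y^2 = x) : Real.sqrt x = y := by
  rw [← h, Real.sqrt_sq hy]

lemma keyGT {a : ℝ} (ha : 2 < a) :
    ∫ u in (-2:ℝ)..2, Real.sqrt (4 - u^2) / (a - u) = Real.pi * (a - Real.sqrt (a^2 - 4)) := by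
  set b := Real.sqrt (a^2-4) with hbdef
  have hb2 : b^2 = a^2 - 4 := Real.sq_sqrt (by nlinarith)
  have hbpos : 0 < b := Real.sqrt_pos.2 (by nlinarith)
  set F : ℝ → ℝ := fun t => a * Real.arcsin (t/2) - Real.sqrt (4 - t^2)
      - b * Real.arcsin ((a*t-4)/(2*(a-t))) with hF
  have hcont : ContinuousOn F (Icc (-2) 2) := by
    apply ContinuousOn.sub
    apply ContinuousOn.sub
    · exact (continuous_const.mul (Real.continuous_arcsin.comp (continuous_id.div_const 2))).continuousOn
    · exact (Real.continuous_sqrt.comp (by continuity)).continuousOn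
    · apply ContinuousOn.mul continuousOn_const
      apply Real.continuous_arcsin.comp_continuousOn
      apply ContinuousOn.div (by fun_prop) (by fun_prop)
      intro x hx h
      have hx2 := hx.2
      have : a - x = 0 := by
        rcases mul_eq_zero.1 h with h' | h'
        · norm_num at h'
        · exact h'
      linarith
  have hint : IntervalIntegrable (fun u => Real.sqrt (4-u^2)/(a-u)) volume (-2) 2 := by
    apply ContinuousOn.intervalIntegrable
    apply ContinuousOn.div (Real.continuous_sqrt.comp (by continuity)).continuousOn
      (continuousOn_const.sub continuousOn_id)
    intro x hx h
    rw [Set.uIcc_of_le (by norm_num : (-2:ℝ) ≤ 2)] at hx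
    have := hx.2; dsimp at h; linarith
  have hderiv : ∀ t ∈ Ioo (-2:ℝ) 2, HasDerivAt F (Real.sqrt (4-t^2)/(a-t)) t := by
    intro t ht
    obtain ⟨ht1, ht2⟩ := ht
    have hat : 0 < a - t := by linarith
    have h4t : 0 < 4 - t^2 := by nlinarith
    set w := Real.sqrt (4 - t^2) with hwdef
    have hw2 : w^2 = 4 - t^2 := Real.sq_sqrt h4t.le
    have hwpos : 0 < w := Real.sqrt_pos.2 h4t
    -- sqrt evaluations
    have hs1 : Real.sqrt (1 - (t/2)^2) = w/2 :=
      sqrt_eval (by positivity) (by rw [div_pow, hw2]; ring)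
    have heq2 : (b*w/(2*(a-t)))^2 = 1 - ((a*t-4)/(2*(a-t)))^2 := by
      field_simp
      nlinarith [hb2, hw2]
    have hs2 : Real.sqrt (1 - ((a*t-4)/(2*(a-t)))^2) = b*w/(2*(a-t)) :=
      sqrt_eval (by positivity) heq2
    have hu1 : ((a*t-4)/(2*(a-t))) ≠ 1 := by
      intro h
      have : (b*w/(2*(a-t)))^2 = 0 := by rw [heq2, h]; ring
      have : b*w/(2*(a-t)) ≠ 0 := by positivity
      simp_all
    have hu2 : ((a*t-4)/(2*(a-t))) ≠ -1 := by
      intro h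
      have : (b*w/(2*(a-t)))^2 = 0 := by rw [heq2, h]; ring
      have : b*w/(2*(a-t)) ≠ 0 := by positivity
      simp_all
    -- derivatives
    have d1 : HasDerivAt (fun t : ℝ => a * Real.arcsin (t/2)) (a * (1/Real.sqrt (1-(t/2)^2) * (1/2))) t := by
      have inner : HasDerivAt (fun t : ℝ => t/2) (1/2) t := (hasDerivAt_id t).div_const 2
      have h1 : t/2 ≠ -1 := by
        intro h; rw [div_eq_iff (by norm_num : (2:ℝ) ≠ 0)] at h; linarith
      have h2 : t/2 ≠ 1 := by
        intro h; rw [div_eq_iff (by norm_num : (2:ℝ) ≠ 0)] at h; linarith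
      exact ((Real.hasDerivAt_arcsin h1 h2).comp t inner).const_mul a
    have d2 : HasDerivAt (fun t : ℝ => Real.sqrt (4 - t^2)) (-(2*t)/(2*w)) t := by
      have inner : HasDerivAt (fun t : ℝ => 4 - t^2) (-(2*t)) t := by
        simpa using (hasDerivAt_pow 2 t).const_sub 4
      simpa [hwdef] using inner.sqrt (by positivity)
    have d3 : HasDerivAt (fun t : ℝ => b * Real.arcsin ((a*t-4)/(2*(a-t))))
        (b * (1/Real.sqrt (1 - ((a*t-4)/(2*(a-t)))^2) *
          ((a * (2*(a-t)) - (a*t-4)*(-2))/(2*(a-t))^2))) t := by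
      have dnum : HasDerivAt (fun t : ℝ => a*t-4) a t := by
        simpa using ((hasDerivAt_id t).const_mul a).sub_const 4
      have dden : HasDerivAt (fun t : ℝ => 2*(a-t)) (-2) t := by
        simpa using ((hasDerivAt_id t).const_sub a).const_mul 2
      have dq := dnum.div dden (by positivity : (2*(a-t)) ≠ 0)
      have := (Real.hasDerivAt_arcsin hu2 hu1).comp t dq
      simpa [mul_comm, mul_assoc, mul_left_comm] using this.const_mul b
    have D := (d1.sub d2).sub d3
    refine D.congr_deriv ?_; symm
    rw [hs1, hs2]
    field_simp
    linear_combination hw2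
  rw [intervalIntegral.integral_eq_sub_of_hasDerivAt_of_le (by norm_num) hcont hderiv hint]
  have e1 : (a*2-4)/(2*(a-2)) = 1 := by
    rw [div_eq_one_iff_eq (by intro h; nlinarith [h] : (2*(a-2)) ≠ 0)]; ring
  have e2 : (a*(-2)-4)/(2*(a-(-2))) = -1 := by
    rw [div_eq_iff (by intro h; nlinarith [h] : (2*(a-(-2))) ≠ 0)]; ring
  rw [hF]
  simp only [e1, e2]
  norm_num [Real.arcsin_one, Real.arcsin_neg_one]
  ring

lemma int2 : IntervalIntegrable (fun u : ℝ => Real.sqrt (4 - u^2) / (2 + u))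
    MeasureTheory.volume (-2) 2 := by
  have hg : IntervalIntegrable (fun u : ℝ => 2 * (u + 2) ^ (-(1/2) : ℝ))
      MeasureTheory.volume (-2) 2 := by
    have h := (intervalIntegral.intervalIntegrable_rpow' (a := 0) (b := 4)
      (r := -(1/2)) (by norm_num)).comp_add_right 2
    norm_num at h
    exact h.const_mul 2
  apply hg.mono_fun'
  · exact ((Real.continuous_sqrt.comp (continuous_const.sub (continuous_pow 2))).measurable.div
      ((continuous_const.add continuous_id).measurable)).aestronglyMeasurable
  · rw [Set.uIoc_of_le (by norm_num : (-2:ℝ) ≤ 2)]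
    filter_upwards [MeasureTheory.ae_restrict_mem measurableSet_Ioc] with x hx
    have h2x : (0:ℝ) < 2 + x := by linarith [hx.1]
    have hnn : 0 ≤ Real.sqrt (4 - x^2) / (2 + x) := by positivity
    rw [Real.norm_of_nonneg hnn]
    set s := Real.sqrt (x + 2) with hs
    have hspos : 0 < s := Real.sqrt_pos.2 (by linarith)
    have hs2 : s^2 = x + 2 := Real.sq_sqrt (by linarith)
    have hrw : (x + 2) ^ (-(1/2) : ℝ) = s⁻¹ := by
      rw [Real.rpow_neg (by linarith), ← Real.sqrt_eq_rpow]
    rw [hrw]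
    have hb : Real.sqrt (4 - x^2) ≤ 2 * s := by
      have h1 : 4 - x^2 ≤ (2*s)^2 := by nlinarith [hs2]
      calc Real.sqrt (4 - x^2) ≤ Real.sqrt ((2*s)^2) := Real.sqrt_le_sqrt h1
        _ = 2*s := Real.sqrt_sq (by positivity)
    rw [div_le_iff₀ h2x]
    have : 2 * s⁻¹ * (2 + x) = 2 * s := by
      field_simp
      nlinarith [hs2]
    rw [this]; exact hb

lemma key2 : ∫ u in (-2:ℝ)..2, Real.sqrt (4-u^2)/(2+u) = 2 * Real.pi := by
  set F : ℝ → ℝ := fun t => 2 * Real.arcsin (t/2) + Real.sqrt (4 - t^2) with hF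
  have hcont : ContinuousOn F (Icc (-2) 2) := by
    apply ContinuousOn.add
    · exact (continuous_const.mul (Real.continuous_arcsin.comp (continuous_id.div_const 2))).continuousOn
    · exact (Real.continuous_sqrt.comp (by continuity)).continuousOn
  have hderiv : ∀ t ∈ Ioo (-2:ℝ) 2, HasDerivAt F (Real.sqrt (4-t^2)/(2+t)) t := by
    intro t ht
    obtain ⟨ht1, ht2⟩ := ht
    have h4t : 0 < 4 - t^2 := by nlinarith
    set w := Real.sqrt (4 - t^2) with hwdef
    have hw2 : w^2 = 4 - t^2 := Real.sq_sqrt h4t.le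
    have hwpos : 0 < w := Real.sqrt_pos.2 h4t
    have hs1 : Real.sqrt (1 - (t/2)^2) = w/2 :=
      sqrt_eval (by positivity) (by rw [div_pow, hw2]; ring)
    have d1 : HasDerivAt (fun t : ℝ => 2 * Real.arcsin (t/2)) (2 * (1/Real.sqrt (1-(t/2)^2) * (1/2))) t := by
      have inner : HasDerivAt (fun t : ℝ => t/2) (1/2) t := (hasDerivAt_id t).div_const 2
      have h1 : t/2 ≠ -1 := by
        intro h; rw [div_eq_iff (by norm_num : (2:ℝ) ≠ 0)] at h; linarith
      have h2 : t/2 ≠ 1 := by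
        intro h; rw [div_eq_iff (by norm_num : (2:ℝ) ≠ 0)] at h; linarith
      exact ((Real.hasDerivAt_arcsin h1 h2).comp t inner).const_mul 2
    have d2 : HasDerivAt (fun t : ℝ => Real.sqrt (4 - t^2)) (-(2*t)/(2*w)) t := by
      have inner : HasDerivAt (fun t : ℝ => 4 - t^2) (-(2*t)) t := by
        simpa using (hasDerivAt_pow 2 t).const_sub 4
      simpa [hwdef] using inner.sqrt (by positivity)
    have h2t : (2:ℝ) + t ≠ 0 := by linarith
    refine (d1.add d2).congr_deriv ?_; symm
    rw [hs1]
    field_simp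
    linear_combination hw2
  rw [intervalIntegral.integral_eq_sub_of_hasDerivAt_of_le (by norm_num) hcont hderiv int2]
  rw [hF]
  norm_num [Real.arcsin_one, Real.arcsin_neg_one]
  ring

lemma keyPlus {a : ℝ} (ha : 2 ≤ a) :
    ∫ u in (-2:ℝ)..2, Real.sqrt (4 - u^2) / (a + u) = Real.pi * (a - Real.sqrt (a^2 - 4)) := by
  rcases eq_or_lt_of_le ha with h | h
  · rw [← h, key2]
    norm_num
    ring
  · have hrefl := intervalIntegral.integral_comp_neg (a := -2) (b := 2)
      (fun u => Real.sqrt (4 - u^2) / (a - u))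
    simp only [neg_neg, neg_sq, sub_neg_eq_add] at hrefl
    rw [hrefl, keyGT h]

lemma J1 {c : ℝ} (h0 : 0 < c) (h1 : c ≤ 1)
 :
    ∫ u in (-2:ℝ)..2, c * (Real.sqrt (4 - u^2) / (1 + c^2 + c*u)) = 2 * Real.pi * c := by
  have hc2 : 2 ≤ c + 1/c := by
    rw [← sub_nonneg]
    have : c + 1/c - 2 = (c-1)^2/c := by field_simp; ring
    rw [this]
    positivity
  have congr1 : ∀ u : ℝ, c * (Real.sqrt (4-u^2)/(1+c^2+c*u)) = Real.sqrt (4-u^2)/((c+1/c)+u) := by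
    intro u
    have hden : (c + 1/c) + u = (1+c^2+c*u)/c := by field_simp; ring
    rw [hden, div_div_eq_mul_div]
    ring
  simp_rw [congr1]
  rw [keyPlus hc2]
  have hs : Real.sqrt ((c+1/c)^2 - 4) = 1/c - c := by
    apply sqrt_eval
    · rw [sub_nonneg, le_div_iff₀ h0]
      nlinarith
    · field_simp
      ring
  rw [hs]
  ring

theorem stmt_8 (c z : ℝ) (hc0 : 0 ≤ c) (hc1 : c ≤ 1) (hz : c + 2 < z) :
    (∫ s in (c - 2)..(c + 2),
        (Real.sqrt (4 - (s - c) ^ 2) / (2 * Real.pi * (1 + c * s))) / (z - s))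
    = (c + z - Real.sqrt ((z - c) ^ 2 - 4)) / (2 * (1 + c * z)) := by
  have hz2 : 2 < z - c := by linarith
  have hcz : 0 < 1 + c * z := by nlinarith
  have hπ : Real.pi ≠ 0 := Real.pi_ne_zero
  rw [show c - 2 = -2 + c by ring, show c + 2 = 2 + c by ring,
    ← intervalIntegral.integral_comp_add_right
      (fun s => (Real.sqrt (4 - (s - c) ^ 2) / (2 * Real.pi * (1 + c * s))) / (z - s)) c]
  have hEq : Set.EqOn
      (fun u => (Real.sqrt (4 - ((u + c) - c) ^ 2) / (2 * Real.pi * (1 + c * (u + c)))) / (z - (u + c)))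
      (fun u => (2 * Real.pi * (1 + c * z))⁻¹ *
        (c * (Real.sqrt (4 - u^2) / (1 + c^2 + c*u)) + Real.sqrt (4 - u^2) / (z - c - u)))
      (Set.uIcc (-2) 2) := by
    intro u hu
    rw [Set.uIcc_of_le (by norm_num : (-2:ℝ) ≤ 2)] at hu
    obtain ⟨hu1, hu2⟩ := hu
    dsimp only
    have huc : (u + c) - c = u := by ring
    rw [huc]
    rcases eq_or_lt_of_le hu1 with h | h
    · rw [← h]
      norm_num
    · have hd1 : 0 < 1 + c^2 + c*u := by
        rcases eq_or_lt_of_le hc0 with h' | h'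
        · rw [← h']; norm_num
        · nlinarith [sq_nonneg (1-c), mul_pos h' (show (0:ℝ) < u + 2 by linarith)]
      have hd1b : (1:ℝ) + c * (u + c) ≠ 0 := by nlinarith [hd1]
      have hd2 : z - c - u ≠ 0 := by intro h'; nlinarith
      have hd3 : z - (u + c) ≠ 0 := by intro h'; nlinarith
      rw [div_div, mul_div_assoc', div_add_div _ _ hd1.ne' hd2, inv_mul_eq_div, div_div,
        div_eq_div_iff (by simp [hπ, hd1b, hd3]) (by simp [hπ, hd1.ne', hd2, hcz.ne'])]
      ring
  rw [intervalIntegral.integral_congr hEq]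
  have h2' : IntervalIntegrable (fun u : ℝ => Real.sqrt (4 - u^2) / (z - c - u))
      MeasureTheory.volume (-2) 2 := by
    apply ContinuousOn.intervalIntegrable
    apply ContinuousOn.div (Real.continuous_sqrt.comp (by continuity)).continuousOn
      (by fun_prop)
    intro x hx
    rw [Set.uIcc_of_le (by norm_num : (-2:ℝ) ≤ 2)] at hx
    have := hx.2
    intro h
    linarith
  have h1' : IntervalIntegrable (fun u : ℝ => c * (Real.sqrt (4 - u^2) / (1 + c^2 + c*u)))
      MeasureTheory.volume (-2) 2 := by
    rcases eq_or_lt_of_le hc1 with h | h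
    · rw [h]
      have heq : (fun u : ℝ => 1 * (Real.sqrt (4-u^2)/(1+1^2+1*u)))
          = fun u : ℝ => Real.sqrt (4-u^2)/(2+u) := by
        funext u; norm_num
      rw [heq]
      exact int2
    · apply IntervalIntegrable.const_mul
      apply ContinuousOn.intervalIntegrable
      apply ContinuousOn.div (Real.continuous_sqrt.comp (by continuity)).continuousOn
        (by fun_prop)
      intro x hx
      rw [Set.uIcc_of_le (by norm_num : (-2:ℝ) ≤ 2)] at hx
      have hx1 := hx.1
      intro hcontra
      nlinarith [sq_nonneg (1-c), mul_nonneg hc0 (show (0:ℝ) ≤ x + 2 by linarith)]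
  rw [intervalIntegral.integral_const_mul, intervalIntegral.integral_add h1' h2',
    keyGT hz2]
  have e1 : ∫ u in (-2:ℝ)..2, c * (Real.sqrt (4 - u^2) / (1 + c^2 + c*u)) = 2 * Real.pi * c := by
    rcases eq_or_lt_of_le hc0 with h | h
    · rw [← h]
      simp
    · exact J1 h hc1
  rw [e1]
  field_simp
  ring
end

section
/- Let c > 1 and let z be a real number with z > c + 2. Then ∫_{c−2}^{c+2} [√(4−(s−c)²)/(2π(1+cs))] / (z − s) ds + (1 − 1/c²)/(z + 1/c) = (c + z − √((z−c)² − 4)) / (2(1+cz)). -/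
open Real Set intervalIntegral MeasureTheory

lemma semicont (x : ℝ) (hx : 2 < x) :
    ContinuousOn (fun t => Real.sqrt (4 - t ^ 2) / (x - t)) (Set.Icc (-2) 2) := by
  apply ContinuousOn.div
  · exact (continuous_const.sub (continuous_pow 2)).continuousOn.sqrt
  · exact (continuous_const.sub continuous_id).continuousOn
  · intro t ht
    have := ht.2
    have : 0 < x - t := by linarith
    exact ne_of_gt this

lemma semint (x : ℝ) (hx : 2 < x) :
    IntervalIntegrable (fun t => Real.sqrt (4 - t ^ 2) / (x - t)) volume (-2) 2 := by
  apply ContinuousOn.intervalIntegrable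
  rw [Set.uIcc_of_le (by norm_num)]
  exact semicont x hx

lemma sem (x : ℝ) (hx : 2 < x) :
    ∫ t in (-2:ℝ)..2, Real.sqrt (4 - t ^ 2) / (x - t)
      = Real.pi * (x - Real.sqrt (x ^ 2 - 4)) := by
  have hx4 : 0 < x ^ 2 - 4 := by nlinarith
  set F : ℝ → ℝ := fun t => x * Real.arcsin (t / 2) - Real.sqrt (4 - t ^ 2)
      - Real.sqrt (x ^ 2 - 4) * Real.arcsin ((x * t - 4) / (2 * (x - t))) with hF
  have key : ∀ t ∈ Set.Ioo (-2:ℝ) 2, HasDerivAt F (Real.sqrt (4 - t ^ 2) / (x - t)) t := by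
    intro t ht
    obtain ⟨ht1, ht2⟩ := ht
    have hxt : 0 < x - t := by linarith
    have h4t : 0 < 4 - t ^ 2 := by nlinarith
    have hs : 0 < Real.sqrt (4 - t ^ 2) := Real.sqrt_pos.mpr h4t
    have hs2 : Real.sqrt (4 - t ^ 2) ^ 2 = 4 - t ^ 2 := Real.sq_sqrt h4t.le
    have hsx : 0 < Real.sqrt (x ^ 2 - 4) := Real.sqrt_pos.mpr hx4
    have hsx2 : Real.sqrt (x ^ 2 - 4) ^ 2 = x ^ 2 - 4 := Real.sq_sqrt hx4.le
    have hsq4 : Real.sqrt ((4 - t ^ 2) / 4) = Real.sqrt (4 - t ^ 2) / 2 := by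
      rw [show (4 - t ^ 2) / 4 = (Real.sqrt (4 - t ^ 2) / 2) ^ 2 by
        rw [div_pow, hs2]; norm_num, Real.sqrt_sq (by positivity)]
    -- part 1
    have d1 : HasDerivAt (fun t : ℝ => x * Real.arcsin (t / 2))
        (x / Real.sqrt (4 - t ^ 2)) t := by
      have hne1 : t / 2 ≠ -1 := by intro h; nlinarith [h]
      have hne2 : t / 2 ≠ 1 := by intro h; nlinarith [h]
      have inner : HasDerivAt (fun t : ℝ => t / 2) (1 / 2) t := by
        simpa using (hasDerivAt_id t).div_const 2
      have h := ((Real.hasDerivAt_arcsin hne1 hne2).comp t inner).const_mul x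
      refine h.congr_deriv (Eq.symm ?_)
      rw [show (1:ℝ) - (t / 2) ^ 2 = (4 - t ^ 2) / 4 by ring, hsq4]
      field_simp
    -- part 2
    have d2 : HasDerivAt (fun t : ℝ => Real.sqrt (4 - t ^ 2))
        (-t / Real.sqrt (4 - t ^ 2)) t := by
      have inner : HasDerivAt (fun t : ℝ => 4 - t ^ 2) (-(2 * t)) t := by
        simpa using ((hasDerivAt_pow 2 t).const_sub 4)
      have h := (Real.hasDerivAt_sqrt (ne_of_gt h4t)).comp t inner
      refine h.congr_deriv (Eq.symm ?_)
      field_simp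
    -- part 3
    have hden : (2 * (x - t)) ≠ 0 := by positivity
    have du : HasDerivAt (fun t : ℝ => (x * t - 4) / (2 * (x - t)))
        ((x ^ 2 - 4) / (2 * (x - t) ^ 2)) t := by
      have dnum : HasDerivAt (fun t : ℝ => x * t - 4) x t := by
        simpa using ((hasDerivAt_id t).const_mul x).sub_const 4
      have dden : HasDerivAt (fun t : ℝ => 2 * (x - t)) (-2) t := by
        have : HasDerivAt (fun t : ℝ => x - t) (-1) t := by
          simpa using (hasDerivAt_id t).const_sub x
        simpa using this.const_mul 2
      have h := dnum.div dden hden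
      refine h.congr_deriv (Eq.symm ?_)
      field_simp
      ring
    set u : ℝ := (x * t - 4) / (2 * (x - t)) with hu
    have h1u : 1 - u ^ 2 = (4 - t ^ 2) * (x ^ 2 - 4) / (2 * (x - t)) ^ 2 := by
      rw [hu]; field_simp; ring
    have h1upos : 0 < 1 - u ^ 2 := by rw [h1u]; positivity
    have hune1 : u ≠ -1 := by intro h; rw [h] at h1upos; norm_num at h1upos
    have hune2 : u ≠ 1 := by intro h; rw [h] at h1upos; norm_num at h1upos
    have hsqu : Real.sqrt (1 - u ^ 2)
        = Real.sqrt (4 - t ^ 2) * Real.sqrt (x ^ 2 - 4) / (2 * (x - t)) := by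
      rw [h1u, show (4 - t ^ 2) * (x ^ 2 - 4) / (2 * (x - t)) ^ 2
        = (Real.sqrt (4 - t ^ 2) * Real.sqrt (x ^ 2 - 4) / (2 * (x - t))) ^ 2 by
          rw [div_pow, mul_pow (Real.sqrt (4 - t ^ 2)), hs2, hsx2],
        Real.sqrt_sq (by positivity)]
    have d3 : HasDerivAt (fun t : ℝ => Real.sqrt (x ^ 2 - 4) *
        Real.arcsin ((x * t - 4) / (2 * (x - t))))
        ((x ^ 2 - 4) / ((x - t) * Real.sqrt (4 - t ^ 2))) t := by
      have h := (((Real.hasDerivAt_arcsin hune1 hune2).comp t du).const_mul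
        (Real.sqrt (x ^ 2 - 4)))
      refine h.congr_deriv (Eq.symm ?_)
      rw [hsqu]
      field_simp
    have := (d1.sub d2).sub d3
    refine this.congr_deriv (Eq.symm ?_)
    rw [eq_comm, div_sub_div _ _ hs.ne' hs.ne', div_sub_div _ _ (by positivity : Real.sqrt (4 - t ^ 2) * Real.sqrt (4 - t ^ 2) ≠ 0) (by positivity : (x - t) * Real.sqrt (4 - t ^ 2) ≠ 0), div_eq_div_iff (by positivity) (by positivity)]
    linear_combination (-(x - t) * Real.sqrt (4 - t ^ 2) ^ 2) * hs2
  have hcont : ContinuousOn F (Set.Icc (-2) 2) := by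
    apply ContinuousOn.sub
    apply ContinuousOn.sub
    · exact (continuousOn_const.mul ((Real.continuous_arcsin.comp
        (continuous_id.div_const 2)).continuousOn))
    · exact ((continuous_const.sub (continuous_pow 2)).continuousOn).sqrt
    · apply continuousOn_const.mul
      apply Real.continuous_arcsin.comp_continuousOn
      apply ContinuousOn.div
      · exact ((continuous_const.mul continuous_id).sub continuous_const).continuousOn
      · exact (continuous_const.mul (continuous_const.sub continuous_id)).continuousOn
      · intro t ht
        have := ht.2
        have : 0 < x - t := by linarith
        positivity
  rw [integral_eq_sub_of_hasDerivAt_of_le (by norm_num) hcont key (semint x hx)]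
  have e1 : (x * 2 - 4) / (2 * (x - 2)) = 1 := by
    have : x - 2 ≠ 0 := by intro h; nlinarith
    field_simp
    ring
  have e2 : (x * (-2) - 4) / (2 * (x - (-2))) = -1 := by
    have : x - -2 ≠ 0 := by intro h; nlinarith
    field_simp
    ring
  have h2 : F 2 = x * (Real.pi / 2) - Real.sqrt (x ^ 2 - 4) * (Real.pi / 2) := by
    simp only [hF]
    rw [show (2:ℝ) / 2 = 1 by norm_num, e1, Real.arcsin_one,
      show (4:ℝ) - 2 ^ 2 = 0 by norm_num, Real.sqrt_zero]
    ring
  have h3 : F (-2) = -(x * (Real.pi / 2)) + Real.sqrt (x ^ 2 - 4) * (Real.pi / 2) := by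
    simp only [hF]
    rw [show (-2:ℝ) / 2 = -1 by norm_num, e2, Real.arcsin_neg_one,
      show (4:ℝ) - (-2) ^ 2 = 0 by norm_num, Real.sqrt_zero]
    ring
  rw [h2, h3]
  ring

theorem stmt_9 (c z : ℝ) (hc : 1 < c) (hz : c + 2 < z) :
    (∫ s in (c - 2)..(c + 2),
        (Real.sqrt (4 - (s - c) ^ 2) / (2 * Real.pi * (1 + c * s))) / (z - s))
      + (1 - 1 / c ^ 2) / (z + 1 / c)
    = (c + z - Real.sqrt ((z - c) ^ 2 - 4)) / (2 * (1 + c * z)) := by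
  have hc0 : 0 < c := by linarith
  have hx1 : 2 < c + 1 / c := by
    have h1 : c + 1 / c - 2 = (c - 1) ^ 2 / c := by field_simp; ring
    nlinarith [div_pos (pow_pos (by linarith : (0:ℝ) < c - 1) 2) hc0, h1]
  have hx2 : 2 < z - c := by linarith
  have hpi : 0 < Real.pi := Real.pi_pos
  have hcz : 0 < 1 + c * z := by nlinarith
  -- substitution s = t + c
  have h1 : (∫ s in (c - 2)..(c + 2),
        (Real.sqrt (4 - (s - c) ^ 2) / (2 * Real.pi * (1 + c * s))) / (z - s))
      = ∫ t in (-2:ℝ)..2,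
        (Real.sqrt (4 - t ^ 2) / (2 * Real.pi * (1 + c * (t + c)))) / (z - (t + c)) := by
    have := intervalIntegral.integral_comp_add_right
      (fun s => (Real.sqrt (4 - (s - c) ^ 2) / (2 * Real.pi * (1 + c * s))) / (z - s)) c
      (a := -2) (b := 2)
    simp only [add_sub_cancel_right] at this
    rw [show c - 2 = -2 + c by ring, show c + 2 = 2 + c by ring, ← this]
  -- partial fractions
  have h2 : (∫ t in (-2:ℝ)..2,
        (Real.sqrt (4 - t ^ 2) / (2 * Real.pi * (1 + c * (t + c)))) / (z - (t + c)))
      = ∫ t in (-2:ℝ)..2, (1 / (2 * Real.pi * (1 + c * z))) *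
          (Real.sqrt (4 - t ^ 2) / (c + 1 / c + t) + Real.sqrt (4 - t ^ 2) / (z - c - t)) := by
    apply intervalIntegral.integral_congr
    intro t ht
    rw [Set.uIcc_of_le (by norm_num)] at ht
    have hp1 : 0 < c + 1 / c + t := by linarith [ht.1]
    have hp2 : 0 < z - c - t := by linarith [ht.2]
    have hd1 : 1 + c * (t + c) = c * (c + 1 / c + t) := by field_simp; ring
    have hd1' : (0:ℝ) < 1 + c * (t + c) := by rw [hd1]; positivity
    have hd2 : 0 < z - (t + c) := by linarith [ht.2]
    show Real.sqrt (4 - t ^ 2) / (2 * Real.pi * (1 + c * (t + c))) / (z - (t + c))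
      = 1 / (2 * Real.pi * (1 + c * z)) *
        (Real.sqrt (4 - t ^ 2) / (c + 1 / c + t) + Real.sqrt (4 - t ^ 2) / (z - c - t))
    have hci : c * (1 / c) = 1 := mul_one_div_cancel hc0.ne'
    rw [div_div, div_add_div _ _ hp1.ne' hp2.ne', one_div_mul_eq_div, div_div,
      div_eq_div_iff (by positivity) (by positivity)]
    linear_combination (2 * Real.pi * Real.sqrt (4 - t ^ 2) * (z - c - t) ^ 2) * hci
  -- split
  have int1 : IntervalIntegrable (fun t => Real.sqrt (4 - t ^ 2) / (c + 1 / c + t))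
      volume (-2) 2 := by
    apply ContinuousOn.intervalIntegrable
    rw [Set.uIcc_of_le (by norm_num)]
    apply ContinuousOn.div
    · exact (continuous_const.sub (continuous_pow 2)).continuousOn.sqrt
    · exact (continuous_const.add continuous_id).continuousOn
    · intro t ht
      have : 0 < c + 1 / c + t := by linarith [ht.1]
      positivity
  have int2 : IntervalIntegrable (fun t => Real.sqrt (4 - t ^ 2) / (z - c - t))
      volume (-2) 2 := by
    apply ContinuousOn.intervalIntegrable
    rw [Set.uIcc_of_le (by norm_num)]
    apply ContinuousOn.div
    · exact (continuous_const.sub (continuous_pow 2)).continuousOn.sqrt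
    · exact (continuous_const.sub continuous_id).continuousOn
    · intro t ht
      have : 0 < z - c - t := by linarith [ht.2]
      positivity
  have h3 : (∫ t in (-2:ℝ)..2, (1 / (2 * Real.pi * (1 + c * z))) *
          (Real.sqrt (4 - t ^ 2) / (c + 1 / c + t) + Real.sqrt (4 - t ^ 2) / (z - c - t)))
      = (1 / (2 * Real.pi * (1 + c * z))) *
          ((∫ t in (-2:ℝ)..2, Real.sqrt (4 - t ^ 2) / (c + 1 / c + t))
            + ∫ t in (-2:ℝ)..2, Real.sqrt (4 - t ^ 2) / (z - c - t)) := by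
    rw [intervalIntegral.integral_const_mul, intervalIntegral.integral_add int1 int2]
  -- first integral: flip
  have hI1 : (∫ t in (-2:ℝ)..2, Real.sqrt (4 - t ^ 2) / (c + 1 / c + t))
      = Real.pi * (c + 1 / c - Real.sqrt ((c + 1 / c) ^ 2 - 4)) := by
    have hneg : (∫ t in (-2:ℝ)..2, Real.sqrt (4 - t ^ 2) / (c + 1 / c + t))
        = ∫ t in (-2:ℝ)..2, (fun s => Real.sqrt (4 - s ^ 2) / (c + 1 / c - s)) (-t) := by
      apply intervalIntegral.integral_congr
      intro t ht
      simp only [neg_sq, sub_neg_eq_add]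
    rw [hneg, intervalIntegral.integral_comp_neg
      (fun s => Real.sqrt (4 - s ^ 2) / (c + 1 / c - s))]
    simp only [neg_neg]
    exact sem (c + 1 / c) hx1
  have hsq1 : Real.sqrt ((c + 1 / c) ^ 2 - 4) = c - 1 / c := by
    rw [show (c + 1 / c) ^ 2 - 4 = (c - 1 / c) ^ 2 by field_simp; ring]
    exact Real.sqrt_sq (by rw [sub_nonneg, div_le_iff₀ hc0]; nlinarith)
  have hI2 : (∫ t in (-2:ℝ)..2, Real.sqrt (4 - t ^ 2) / (z - c - t))
      = Real.pi * (z - c - Real.sqrt ((z - c) ^ 2 - 4)) := sem (z - c) hx2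
  rw [h1, h2, h3, hI1, hI2, hsq1]
  have hz0 : 0 < z := by linarith
  have hzc : 0 < z + 1 / c := by positivity
  field_simp [hpi.ne', hcz.ne', hc0.ne', hzc.ne']
  ring
end

section
/- Let c ≥ 0 and let z be a real number with z > c + 2, and set G = (c + z − √((z−c)² − 4)) / (2(1+cz)). Then G > 0, c·G < 1, and 1/G + G/(1 − c·G) = z. -/
theorem stmt_10 (c z G : ℝ) (hc : 0 ≤ c) (hz : c + 2 < z)
    (hG : G = (c + z - Real.sqrt ((z - c) ^ 2 - 4)) / (2 * (1 + c * z))) :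
    0 < G ∧ c * G < 1 ∧ 1 / G + G / (1 - c * G) = z := by
  set s := Real.sqrt ((z - c) ^ 2 - 4) with hsdef
  have hzc : 2 < z - c := by linarith
  have hnn : (0:ℝ) ≤ (z - c) ^ 2 - 4 := by nlinarith
  have hs0 : 0 ≤ s := Real.sqrt_nonneg _
  have hs2 : s ^ 2 = (z - c) ^ 2 - 4 := Real.sq_sqrt hnn
  have hslt : s < z - c := by
    nlinarith [hs2, hs0]
  have hd : 0 < 1 + c * z := by nlinarith
  have hGpos : 0 < G := by
    rw [hG]
    apply div_pos _ (by linarith)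
    linarith
  have hcG : c * G < 1 := by
    rw [hG, mul_div_assoc', div_lt_one (by linarith)]
    nlinarith
  refine ⟨hGpos, hcG, ?_⟩
  have hquad : (1 + c * z) * G ^ 2 - (c + z) * G + 1 = 0 := by
    rw [hG]
    field_simp
    nlinarith [hs2]
  have hG0 : G ≠ 0 := ne_of_gt hGpos
  have h1 : 1 - c * G ≠ 0 := by linarith [hcG]
  rw [div_add_div _ _ hG0 h1, div_eq_iff (mul_ne_zero hG0 h1)]
  nlinarith [hquad]
end

section
/- Let α, β, Z be natural numbers with α < β. Then ∑_{z=0}^{Z} (−1)^z · binom(Z,z) · (α+z)!/(β+z)! = α! · (β−α+Z−1)! / [(β−α−1)! · (β+Z)!], as an identity of rational numbers. -/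
open Finset

lemma aux_13 (d : ℕ) : ∀ (Z α : ℕ),
    ∑ z ∈ range (Z + 1),
      (-1 : ℚ) ^ z * (Z.choose z : ℚ) *
        ((Nat.factorial (α + z) : ℚ) / (Nat.factorial (α + d + 1 + z) : ℚ))
    = (Nat.factorial α : ℚ) * (Nat.factorial (d + Z) : ℚ) /
        ((Nat.factorial d : ℚ) * (Nat.factorial (α + d + 1 + Z) : ℚ))
  | 0, α => by
    have hd : (Nat.factorial d : ℚ) ≠ 0 := by exact_mod_cast Nat.factorial_ne_zero d
    have hf : (Nat.factorial (α + d + 1 + 0) : ℚ) ≠ 0 := by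
      exact_mod_cast Nat.factorial_ne_zero _
    simp only [Finset.sum_range_one, pow_zero, Nat.choose_zero_right, Nat.cast_one,
      Nat.add_zero, Nat.zero_add, one_mul, add_zero]
    field_simp
  | (Z + 1), α => by
    have key : ∑ z ∈ range (Z + 1 + 1),
        (-1 : ℚ) ^ z * ((Z+1).choose z : ℚ) *
          ((Nat.factorial (α + z) : ℚ) / (Nat.factorial (α + d + 1 + z) : ℚ))
        = (∑ z ∈ range (Z + 1),
            (-1 : ℚ) ^ z * (Z.choose z : ℚ) *
              ((Nat.factorial (α + z) : ℚ) / (Nat.factorial (α + d + 1 + z) : ℚ)))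
          - (∑ z ∈ range (Z + 1),
            (-1 : ℚ) ^ z * (Z.choose z : ℚ) *
              ((Nat.factorial ((α+1) + z) : ℚ) / (Nat.factorial ((α+1) + d + 1 + z) : ℚ))) := by
      rw [Finset.sum_range_succ' (fun z => (-1 : ℚ) ^ z * ((Z+1).choose z : ℚ) *
          ((Nat.factorial (α + z) : ℚ) / (Nat.factorial (α + d + 1 + z) : ℚ)))]
      rw [Finset.sum_range_succ' (fun z => (-1 : ℚ) ^ z * (Z.choose z : ℚ) *
          ((Nat.factorial (α + z) : ℚ) / (Nat.factorial (α + d + 1 + z) : ℚ)))]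
      have hZ : ∑ z ∈ range Z,
          (-1 : ℚ) ^ (z+1) * (Z.choose (z+1) : ℚ) *
            ((Nat.factorial (α + (z+1)) : ℚ) / (Nat.factorial (α + d + 1 + (z+1)) : ℚ))
          = ∑ z ∈ range (Z+1),
          (-1 : ℚ) ^ (z+1) * (Z.choose (z+1) : ℚ) *
            ((Nat.factorial (α + (z+1)) : ℚ) / (Nat.factorial (α + d + 1 + (z+1)) : ℚ)) := by
        rw [Finset.sum_range_succ]
        simp [Nat.choose_succ_self]
      rw [hZ, add_sub_right_comm, ← Finset.sum_sub_distrib]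
      congr 1
      · apply Finset.sum_congr rfl
        intro z _
        have hc : (((Z+1).choose (z+1) : ℕ) : ℚ) = (Z.choose z : ℚ) + (Z.choose (z+1) : ℚ) := by
          exact_mod_cast Nat.choose_succ_succ Z z
        have hi1 : α + 1 + z = α + (z + 1) := by ring
        have hi2 : α + 1 + d + 1 + z = α + d + 1 + (z + 1) := by ring
        rw [hi1, hi2, hc]
        ring
      · simp
    rw [key, aux_13 d Z α, aux_13 d Z (α+1)]
    have hd : (Nat.factorial d : ℚ) ≠ 0 := by exact_mod_cast Nat.factorial_ne_zero d
    have hf : (Nat.factorial (α + d + 1 + Z) : ℚ) ≠ 0 := by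
      exact_mod_cast Nat.factorial_ne_zero _
    have e1 : (Nat.factorial (α + 1 + d + 1 + Z) : ℚ)
        = ((α + d + 1 + Z : ℕ) + 1 : ℚ) * (Nat.factorial (α + d + 1 + Z) : ℚ) := by
      have : α + 1 + d + 1 + Z = (α + d + 1 + Z) + 1 := by ring
      rw [this, Nat.factorial_succ]
      push_cast; ring
    have e2 : (Nat.factorial (α + d + 1 + (Z + 1)) : ℚ)
        = ((α + d + 1 + Z : ℕ) + 1 : ℚ) * (Nat.factorial (α + d + 1 + Z) : ℚ) := by
      have : α + d + 1 + (Z + 1) = (α + d + 1 + Z) + 1 := by ring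
      rw [this, Nat.factorial_succ]
      push_cast; ring
    have e3 : (Nat.factorial (d + (Z + 1)) : ℚ)
        = ((d + Z : ℕ) + 1 : ℚ) * (Nat.factorial (d + Z) : ℚ) := by
      have : d + (Z + 1) = (d + Z) + 1 := by ring
      rw [this, Nat.factorial_succ]
      push_cast; ring
    have e4 : (Nat.factorial (α + 1) : ℚ) = ((α : ℚ) + 1) * (Nat.factorial α : ℚ) := by
      rw [Nat.factorial_succ]; push_cast; ring
    rw [e1, e2, e3, e4]
    field_simp
    push_cast
    ring

theorem stmt_13 (α β Z : ℕ) (h : α < β) :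
    ∑ z ∈ range (Z + 1),
      (-1 : ℚ) ^ z * (Z.choose z : ℚ) *
        ((Nat.factorial (α + z) : ℚ) / (Nat.factorial (β + z) : ℚ))
    = (Nat.factorial α : ℚ) * (Nat.factorial (β - α + Z - 1) : ℚ) /
        ((Nat.factorial (β - α - 1) : ℚ) * (Nat.factorial (β + Z) : ℚ)) := by
  obtain ⟨d, hd⟩ : ∃ d, β = α + d + 1 := ⟨β - α - 1, by omega⟩
  subst hd
  have h1 : α + d + 1 - α + Z - 1 = d + Z := by omega
  have h2 : α + d + 1 - α - 1 = d := by omega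
  rw [h1, h2]
  have := aux_13 d Z α
  convert this using 2
end

section
/- Let s and l be integers with 2 ≤ l ≤ s, let V be a vector space over ℚ, and let Y : ℕ → V. Then ∑_{μ} (1/∏_{i≥1} m_i(μ)!) · (∑_{p ∈ μ} Y_p) = (1/(l−1)!) · ∑_{u=0}^{s−l} binom(l−2+u, u) · Y_{s−l+1−u}, where the outer sum ranges over all integer partitions μ of s with exactly l parts, m_i(μ) denotes the number of parts of μ equal to i, and ∑_{p ∈ μ} Y_p = ∑_{i≥1} m_i(μ) · Y_i sums Y over the parts of μ counted with multiplicity. -/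
open Finset

def Pw {n : ℕ} (μ : Nat.Partition n) : ℕ :=
  ∏ i ∈ Finset.Icc 1 n, Nat.factorial (μ.parts.count i)

def T (n j : ℕ) : ℚ :=
  ∑ μ ∈ Finset.univ.filter (fun μ : Nat.Partition n => Multiset.card μ.parts = j),
    (1 : ℚ) / (Pw μ : ℚ)

lemma Pw_pos {n : ℕ} (μ : Nat.Partition n) : 0 < Pw μ :=
  Finset.prod_pos fun _ _ => Nat.factorial_pos _

lemma part_le {n : ℕ} (μ : Nat.Partition n) {p : ℕ} (h : p ∈ μ.parts) : p ≤ n :=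
  μ.parts_sum ▸ Multiset.single_le_sum (fun _ _ => Nat.zero_le _) _ h

lemma count_zero_of_gt (m : Multiset ℕ) {a p : ℕ} (hsum : m.sum = a) (h : a < p) :
    m.count p = 0 := by
  rw [Multiset.count_eq_zero]
  intro hm
  exact absurd (hsum ▸ Multiset.single_le_sum (fun _ _ => Nat.zero_le _) _ hm) (not_le.2 h)

lemma prod_Icc_restrict (m : Multiset ℕ) {a b : ℕ} (hsum : m.sum = a) (hab : a ≤ b) :
    ∏ i ∈ Finset.Icc 1 b, Nat.factorial (m.count i)
      = ∏ i ∈ Finset.Icc 1 a, Nat.factorial (m.count i) := by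
  refine (Finset.prod_subset (Finset.Icc_subset_Icc_right hab) fun x hx hnx => ?_).symm
  have : a < x := by simp only [Finset.mem_Icc] at hx hnx; omega
  rw [count_zero_of_gt m hsum this, Nat.factorial_zero]

lemma keyA (n j k : ℕ) (hk1 : 1 ≤ k) (hkn : k ≤ n) :
    ∑ μ ∈ Finset.univ.filter (fun μ : Nat.Partition n => Multiset.card μ.parts = j + 1),
      (μ.parts.count k : ℚ) / (Pw μ : ℚ) = T (n - k) j := by
  have hstep :
      ∑ μ ∈ Finset.univ.filter (fun μ : Nat.Partition n => Multiset.card μ.parts = j + 1),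
        (μ.parts.count k : ℚ) / (Pw μ : ℚ)
      = ∑ μ ∈ Finset.univ.filter
          (fun μ : Nat.Partition n => Multiset.card μ.parts = j + 1 ∧ k ∈ μ.parts),
          (μ.parts.count k : ℚ) / (Pw μ : ℚ) := by
    have hsub : Finset.univ.filter
          (fun μ : Nat.Partition n => Multiset.card μ.parts = j + 1 ∧ k ∈ μ.parts)
        ⊆ Finset.univ.filter (fun μ : Nat.Partition n => Multiset.card μ.parts = j + 1) := by
      intro μ h
      simp only [Finset.mem_filter, Finset.mem_univ, true_and] at h ⊢
      exact h.1
    refine (Finset.sum_subset hsub ?_).symm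
    intro μ hμ hnμ
    simp only [Finset.mem_filter, Finset.mem_univ, true_and] at hμ hnμ
    have : k ∉ μ.parts := fun h => hnμ ⟨hμ, h⟩
    rw [Multiset.count_eq_zero.2 this]
    simp
  rw [hstep, T]
  refine Finset.sum_bij' (i := fun μ hμ => ?_) (j := fun ν hν => ?_) ?_ ?_ ?_ ?_ ?_
  · -- forward map: erase k
    refine ⟨μ.parts.erase k, fun hi => μ.parts_pos (Multiset.mem_of_mem_erase hi), ?_⟩
    simp only [Finset.mem_filter, Finset.mem_univ, true_and] at hμ
    have := Multiset.cons_erase hμ.2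
    have hs : (k ::ₘ μ.parts.erase k).sum = n := by rw [this, μ.parts_sum]
    rw [Multiset.sum_cons] at hs
    omega
  · -- backward map: cons k
    refine ⟨k ::ₘ ν.parts, fun hi => ?_, ?_⟩
    · rcases Multiset.mem_cons.1 hi with h | h
      · omega
      · exact ν.parts_pos h
    · rw [Multiset.sum_cons, ν.parts_sum]; omega
  · -- forward mem
    intro μ hμ
    simp only [Finset.mem_filter, Finset.mem_univ, true_and] at hμ ⊢
    rw [Multiset.card_erase_of_mem hμ.2, hμ.1]
    rfl
  · -- backward mem
    intro ν hν
    simp only [Finset.mem_filter, Finset.mem_univ, true_and] at hν ⊢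
    constructor
    · rw [Multiset.card_cons, hν]
    · exact Multiset.mem_cons_self _ _
  · -- left inverse
    intro μ hμ
    simp only [Finset.mem_filter, Finset.mem_univ, true_and] at hμ
    exact Nat.Partition.ext (Multiset.cons_erase hμ.2)
  · -- right inverse
    intro ν hν
    exact Nat.Partition.ext (Multiset.erase_cons_head _ _)
  · -- values
    intro μ hμ
    simp only [Finset.mem_filter, Finset.mem_univ, true_and] at hμ
    have hk : k ∈ μ.parts := hμ.2
    have hc1 : 1 ≤ μ.parts.count k := Multiset.one_le_count_iff_mem.2 hk
    have hesum : (μ.parts.erase k).sum = n - k := by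
      have h1 := Multiset.cons_erase hk
      have hs : (k ::ₘ μ.parts.erase k).sum = n := by rw [h1, μ.parts_sum]
      rw [Multiset.sum_cons] at hs
      omega
    simp only [Pw]
    have hext : ∏ i ∈ Finset.Icc 1 n, Nat.factorial ((μ.parts.erase k).count i)
        = ∏ i ∈ Finset.Icc 1 (n - k), Nat.factorial ((μ.parts.erase k).count i) :=
      prod_Icc_restrict _ hesum (Nat.sub_le n k)
    have hkmem : k ∈ Finset.Icc 1 n := by simp only [Finset.mem_Icc]; omega
    have hkey : (∏ i ∈ Finset.Icc 1 n, Nat.factorial ((μ.parts.erase k).count i))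
          * (μ.parts.count k)
        = ∏ i ∈ Finset.Icc 1 n, Nat.factorial (μ.parts.count i) := by
      rw [← Finset.mul_prod_erase _ (fun i => Nat.factorial ((μ.parts.erase k).count i)) hkmem,
        ← Finset.mul_prod_erase _ (fun i => Nat.factorial (μ.parts.count i)) hkmem]
      have hcong : ∏ i ∈ (Finset.Icc 1 n).erase k, Nat.factorial ((μ.parts.erase k).count i)
          = ∏ i ∈ (Finset.Icc 1 n).erase k, Nat.factorial (μ.parts.count i) :=
        Finset.prod_congr rfl fun x hx => by
          rw [Multiset.count_erase_of_ne (Finset.ne_of_mem_erase hx)]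
      rw [hcong, Multiset.count_erase_self]
      obtain ⟨d, hd⟩ : ∃ d, μ.parts.count k = d + 1 := ⟨μ.parts.count k - 1, by omega⟩
      rw [hd]
      simp only [Nat.add_sub_cancel, Nat.factorial_succ]
      ring
    rw [← hext] at *
    have hA : (∏ i ∈ Finset.Icc 1 n, Nat.factorial (μ.parts.count i))
        = (∏ i ∈ Finset.Icc 1 n, Nat.factorial ((μ.parts.erase k).count i))
          * (μ.parts.count k) := hkey.symm
    rw [hA]
    have hB : ((∏ i ∈ Finset.Icc 1 n, Nat.factorial ((μ.parts.erase k).count i) : ℕ) : ℚ) ≠ 0 := by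
      exact_mod_cast (Finset.prod_pos fun _ _ => Nat.factorial_pos _).ne'
    have hcne : ((μ.parts.count k : ℕ) : ℚ) ≠ 0 := by exact_mod_cast (by omega : μ.parts.count k ≠ 0)
    push_cast
    field_simp

lemma parts_zero {n : ℕ} (hn : n = 0) (μ : Nat.Partition n) : μ.parts = 0 := by
  refine Multiset.eq_zero_of_forall_notMem fun x hx => ?_
  have h1 := μ.parts_pos hx
  have h2 := part_le μ hx
  omega

lemma T_zero (n : ℕ) : T n 0 = if n = 0 then 1 else 0 := by
  by_cases hn : n = 0
  · subst hn
    rw [if_pos rfl, T]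
    have hfilter : (Finset.univ.filter
        (fun μ : Nat.Partition 0 => Multiset.card μ.parts = 0))
        = {⟨0, fun h => absurd h (Multiset.notMem_zero _), rfl⟩} := by
      ext μ
      simp only [Finset.mem_filter, Finset.mem_univ, true_and, Finset.mem_singleton]
      constructor
      · intro _; exact Nat.Partition.ext (parts_zero rfl μ)
      · intro h; rw [h]; rfl
    rw [hfilter, Finset.sum_singleton]
    simp [Pw]
  · rw [if_neg hn, T]
    rw [Finset.filter_false_of_mem, Finset.sum_empty]
    intro μ _
    intro hc
    have h0 : μ.parts = 0 := Multiset.card_eq_zero.1 hc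
    have hs := μ.parts_sum
    rw [h0, Multiset.sum_zero] at hs
    omega
  
lemma card_le_sum_parts {n : ℕ} (μ : Nat.Partition n) : Multiset.card μ.parts ≤ n := by
  have : Multiset.card μ.parts • 1 ≤ μ.parts.sum :=
    Multiset.card_nsmul_le_sum fun x hx => μ.parts_pos hx
  simpa [μ.parts_sum] using this

lemma T_eq_zero_of_lt {n j : ℕ} (h : n < j) : T n j = 0 := by
  rw [T, Finset.filter_false_of_mem, Finset.sum_empty]
  intro μ _ hc
  have := card_le_sum_parts μ
  omega

lemma sum_count {n : ℕ} (μ : Nat.Partition n) :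
    ∑ k ∈ Finset.Icc 1 n, μ.parts.count k = Multiset.card μ.parts := by
  rw [← Multiset.toFinset_sum_count_eq]
  refine (Finset.sum_subset ?_ ?_).symm
  · intro x hx
    rw [Multiset.mem_toFinset] at hx
    simp only [Finset.mem_Icc]
    exact ⟨μ.parts_pos hx, part_le μ hx⟩
  · intro x _ hx
    rw [Multiset.mem_toFinset] at hx
    exact Multiset.count_eq_zero.2 hx

lemma T_rec (n j : ℕ) (hn : 1 ≤ n) :
    ((j : ℚ) + 1) * T n (j + 1) = ∑ k ∈ Finset.Icc 1 n, T (n - k) j := by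
  have : ∑ k ∈ Finset.Icc 1 n, T (n - k) j
      = ∑ k ∈ Finset.Icc 1 n,
          ∑ μ ∈ Finset.univ.filter
            (fun μ : Nat.Partition n => Multiset.card μ.parts = j + 1),
            (μ.parts.count k : ℚ) / (Pw μ : ℚ) := by
    refine Finset.sum_congr rfl fun k hk => ?_
    rw [Finset.mem_Icc] at hk
    exact (keyA n j k hk.1 hk.2).symm
  rw [this, Finset.sum_comm]
  rw [T, Finset.mul_sum]
  refine Finset.sum_congr rfl fun μ hμ => ?_
  simp only [Finset.mem_filter, Finset.mem_univ, true_and] at hμ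
  rw [← Finset.sum_div]
  rw [← Nat.cast_sum, sum_count, hμ]
  push_cast
  ring

lemma T_closed : ∀ j n : ℕ, 1 ≤ j → j ≤ n →
    T n j = (((n - 1).choose (j - 1) : ℕ) : ℚ) / (Nat.factorial j : ℚ) := by
  intro j
  induction j with
  | zero => intro n h; omega
  | succ j ih =>
    intro n _ hn
    have hrec := T_rec n j (by omega)
    rcases Nat.eq_zero_or_pos j with hj0 | hj1
    · subst hj0
      have hsum : ∑ k ∈ Finset.Icc 1 n, T (n - k) 0 = 1 := by
        have : ∀ k ∈ Finset.Icc 1 n, T (n - k) 0 = if n - k = 0 then 1 else 0 :=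
          fun k _ => T_zero _
        rw [Finset.sum_congr rfl this]
        rw [Finset.sum_eq_single_of_mem n (by simp [Finset.mem_Icc]; omega)]
        · simp
        · intro k hk hne
          rw [Finset.mem_Icc] at hk
          rw [if_neg (by omega)]
      rw [hsum] at hrec
      push_cast at hrec
      simp only [zero_add, Nat.zero_add] at hrec ⊢
      rw [one_mul] at hrec
      rw [hrec]
      norm_num
    · -- j ≥ 1 case
      have hterm : ∀ k ∈ Finset.Icc 1 n, T (n - k) j
          = if j ≤ n - k
              then (((n - k - 1).choose (j - 1) : ℕ) : ℚ) / (Nat.factorial j : ℚ)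
              else 0 := by
        intro k hk
        by_cases h : j ≤ n - k
        · rw [if_pos h, ih (n - k) hj1 h]
        · rw [if_neg h, T_eq_zero_of_lt (by omega)]
      rw [Finset.sum_congr rfl hterm] at hrec
      rw [← Finset.sum_filter] at hrec
      have hfil : (Finset.Icc 1 n).filter (fun k => j ≤ n - k) = Finset.Icc 1 (n - j) := by
        ext k
        simp only [Finset.mem_filter, Finset.mem_Icc]
        omega
      rw [hfil, ← Finset.sum_div] at hrec
      have hnat : ∑ k ∈ Finset.Icc 1 (n - j), (((n - k - 1).choose (j - 1) : ℕ) : ℚ)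
          = (((n - 1).choose j : ℕ) : ℚ) := by
        rw [← Nat.cast_sum]
        congr 1
        rw [show ((n - 1).choose j) = ((n - 2) + 1).choose ((j - 1) + 1) by
          congr 1 <;> omega]
        rw [← Nat.sum_Icc_choose]
        refine Finset.sum_nbij' (i := fun k => n - 1 - k) (j := fun m => n - 1 - m)
          ?_ ?_ ?_ ?_ ?_
        · intro k hk; simp only [Finset.mem_Icc] at hk ⊢; omega
        · intro m hm; simp only [Finset.mem_Icc] at hm ⊢; omega
        · intro k hk; simp only [Finset.mem_Icc] at hk
          show n - 1 - (n - 1 - k) = k; omega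
        · intro m hm; simp only [Finset.mem_Icc] at hm
          show n - 1 - (n - 1 - m) = m; omega
        · intro k hk; simp only [Finset.mem_Icc] at hk
          show (n - k - 1).choose (j - 1) = (n - 1 - k).choose (j - 1)
          congr 1
          omega
      rw [hnat] at hrec
      have hne : ((j : ℚ) + 1) ≠ 0 := by positivity
      have : T n (j + 1) = (((n - 1).choose j : ℕ) : ℚ)
          / (Nat.factorial j : ℚ) / ((j : ℚ) + 1) := by
        field_simp at hrec ⊢
        linarith [hrec]
      rw [this, show (j + 1) - 1 = j from rfl, Nat.factorial_succ, div_div]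
      push_cast
      ring

theorem stmt_15 (s l : ℕ) (hl : 2 ≤ l) (hls : l ≤ s)
    (V : Type*) [AddCommGroup V] [Module ℚ V] (Y : ℕ → V) :
    ∑ μ ∈ Finset.univ.filter (fun μ : Nat.Partition s => Multiset.card μ.parts = l),
      ((1 : ℚ) / ((∏ i ∈ Finset.Icc 1 s, Nat.factorial (μ.parts.count i) : ℕ) : ℚ))
        • (μ.parts.map Y).sum
    = ((1 : ℚ) / (Nat.factorial (l - 1) : ℚ)) •
        ∑ u ∈ range (s - l + 1), (((l - 2 + u).choose u : ℕ) : ℚ) • Y (s - l + 1 - u) := by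
  obtain ⟨j, rfl⟩ : ∃ j, l = j + 1 := ⟨l - 1, by omega⟩
  have hj1 : 1 ≤ j := by omega
  have hjs : j + 1 ≤ s := hls
  -- rewrite LHS
  have hmap : ∀ μ : Nat.Partition s,
      (μ.parts.map Y).sum = ∑ k ∈ Finset.Icc 1 s, μ.parts.count k • Y k := by
    intro μ
    rw [Finset.sum_multiset_map_count]
    refine Finset.sum_subset ?_ ?_
    · intro x hx
      rw [Multiset.mem_toFinset] at hx
      simp only [Finset.mem_Icc]
      exact ⟨μ.parts_pos hx, part_le μ hx⟩
    · intro x _ hx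
      rw [Multiset.mem_toFinset] at hx
      rw [Multiset.count_eq_zero.2 hx, zero_smul]
  have hLHS : ∑ μ ∈ Finset.univ.filter
        (fun μ : Nat.Partition s => Multiset.card μ.parts = j + 1),
      ((1 : ℚ) / ((∏ i ∈ Finset.Icc 1 s, Nat.factorial (μ.parts.count i) : ℕ) : ℚ))
        • (μ.parts.map Y).sum
      = ∑ k ∈ Finset.Icc 1 s, T (s - k) j • Y k := by
    have step1 : ∀ μ ∈ Finset.univ.filter
        (fun μ : Nat.Partition s => Multiset.card μ.parts = j + 1),
        ((1 : ℚ) / ((∏ i ∈ Finset.Icc 1 s, Nat.factorial (μ.parts.count i) : ℕ) : ℚ))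
          • (μ.parts.map Y).sum
        = ∑ k ∈ Finset.Icc 1 s, ((μ.parts.count k : ℚ) / (Pw μ : ℚ)) • Y k := by
      intro μ _
      rw [hmap μ, Finset.smul_sum]
      refine Finset.sum_congr rfl fun k _ => ?_
      rw [← Nat.cast_smul_eq_nsmul ℚ, smul_smul]
      congr 1
      rw [Pw]
      ring
    rw [Finset.sum_congr rfl step1, Finset.sum_comm]
    refine Finset.sum_congr rfl fun k hk => ?_
    rw [Finset.mem_Icc] at hk
    rw [← Finset.sum_smul, keyA s j k hk.1 hk.2]
  rw [hLHS]
  -- evaluate T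
  have hT : ∀ k ∈ Finset.Icc 1 s, T (s - k) j • Y k
      = if k ≤ s - j then ((((s - k - 1).choose (j - 1) : ℕ) : ℚ)
          / (Nat.factorial j : ℚ)) • Y k else 0 := by
    intro k hk
    rw [Finset.mem_Icc] at hk
    by_cases h : k ≤ s - j
    · rw [if_pos h, T_closed j (s - k) hj1 (by omega)]
    · rw [if_neg h, T_eq_zero_of_lt (by omega), zero_smul]
  rw [Finset.sum_congr rfl hT, ← Finset.sum_filter]
  have hfil : (Finset.Icc 1 s).filter (fun k => k ≤ s - j) = Finset.Icc 1 (s - j) := by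
    ext k
    simp only [Finset.mem_filter, Finset.mem_Icc]
    omega
  rw [hfil]
  -- RHS
  rw [Finset.smul_sum]
  have hru : s - (j + 1) + 1 = s - j := by omega
  rw [hru]
  refine Finset.sum_nbij' (i := fun k => s - j - k) (j := fun u => s - j - u)
    ?_ ?_ ?_ ?_ ?_
  · intro k hk; simp only [Finset.mem_Icc] at hk; simp only [Finset.mem_range]; omega
  · intro u hu; simp only [Finset.mem_range] at hu; simp only [Finset.mem_Icc]; omega
  · intro k hk; simp only [Finset.mem_Icc] at hk
    show s - j - (s - j - k) = k; omega
  · intro u hu; simp only [Finset.mem_range] at hu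
    show s - j - (s - j - u) = u; omega
  · intro k hk
    simp only [Finset.mem_Icc] at hk
    show ((((s - k - 1).choose (j - 1) : ℕ) : ℚ) / (Nat.factorial j : ℚ)) • Y k
      = (1 / (Nat.factorial (j + 1 - 1) : ℚ))
          • ((((j + 1 - 2 + (s - j - k)).choose (s - j - k) : ℕ) : ℚ) • Y (s - j - (s - j - k)))
    rw [smul_smul]
    have h1 : j + 1 - 2 + (s - j - k) = s - k - 1 := by omega
    have h2 : s - j - (s - j - k) = k := by omega
    have h3 : j + 1 - 1 = j := by omega
    rw [h1, h2, h3]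
    have h4 : (s - k - 1).choose (s - j - k) = (s - k - 1).choose (j - 1) := by
      rw [show s - j - k = (s - k - 1) - (j - 1) by omega]
      exact Nat.choose_symm (by omega)
    rw [h4]
    congr 1
    ring
end

section
/- Let R be a commutative ring, c ∈ R, M an R-module, and X : ℕ → M a sequence with X_0 = 0 and X_1 = 0. Then for every natural number k: ∑_{l=0}^{k−1} [∑_{m=0}^{⌊l/2⌋} binom(k+1, m) · binom(k+1−2m, l−2m) · (−c)^{l−2m}] · X_{k+1−l} = ∑_{m=0}^{⌊(k+1)/2⌋} binom(k+1, m) · [∑_{l=0}^{k−1−2m} binom(k+1−2m, l) · (−c)^l · X_{k+1−2m−l}]. -/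
open Finset

theorem stmt_18 (R : Type*) [CommRing R] (c : R) (M : Type*) [AddCommGroup M] [Module R M]
    (X : ℕ → M) (hX0 : X 0 = 0) (hX1 : X 1 = 0) (k : ℕ) :
    ∑ l ∈ range k,
      (∑ m ∈ range (l / 2 + 1),
          (((k + 1).choose m : R) * ((k + 1 - 2 * m).choose (l - 2 * m) : R)) *
            (-c) ^ (l - 2 * m)) • X (k + 1 - l)
    = ∑ m ∈ range ((k + 1) / 2 + 1),
        ((k + 1).choose m : R) •
          ∑ l ∈ range (k - 1 - 2 * m + 1),
            (((k + 1 - 2 * m).choose l : R) * (-c) ^ l) • X (k + 1 - 2 * m - l) := by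
  have hL : ∑ l ∈ range k,
      (∑ m ∈ range (l / 2 + 1),
          (((k + 1).choose m : R) * ((k + 1 - 2 * m).choose (l - 2 * m) : R)) *
            (-c) ^ (l - 2 * m)) • X (k + 1 - l)
      = ∑ p ∈ (range k).sigma (fun l => range (l / 2 + 1)),
          ((((k + 1).choose p.2 : R) * (((k + 1 - 2 * p.2).choose (p.1 - 2 * p.2) : R)
            * (-c) ^ (p.1 - 2 * p.2)))) • X (k + 1 - p.1) := by
    rw [Finset.sum_sigma]
    refine Finset.sum_congr rfl fun l _ => ?_
    rw [Finset.sum_smul]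
    exact Finset.sum_congr rfl fun m _ => by rw [mul_assoc]
  have hR : ∑ m ∈ range ((k + 1) / 2 + 1),
        ((k + 1).choose m : R) •
          ∑ l ∈ range (k - 1 - 2 * m + 1),
            (((k + 1 - 2 * m).choose l : R) * (-c) ^ l) • X (k + 1 - 2 * m - l)
      = ∑ p ∈ (range ((k + 1) / 2 + 1)).sigma (fun m => range (k - 1 - 2 * m + 1)),
          ((((k + 1).choose p.1 : R) * (((k + 1 - 2 * p.1).choose p.2 : R)
            * (-c) ^ p.2))) • X (k + 1 - 2 * p.1 - p.2) := by
    rw [Finset.sum_sigma]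
    refine Finset.sum_congr rfl fun m _ => ?_
    rw [Finset.smul_sum]
    exact Finset.sum_congr rfl fun l _ => (smul_smul _ _ _)
  rw [hL, hR]
  rw [← Finset.sum_filter_of_ne
    (p := fun p : Σ _ : ℕ, ℕ => 2 * p.1 + p.2 < k)
    (f := fun p : Σ _ : ℕ, ℕ =>
      ((((k + 1).choose p.1 : R) * (((k + 1 - 2 * p.1).choose p.2 : R)
        * (-c) ^ p.2))) • X (k + 1 - 2 * p.1 - p.2))
    ?_]
  · refine Finset.sum_nbij' (fun p => ⟨p.2, p.1 - 2 * p.2⟩) (fun p => ⟨p.2 + 2 * p.1, p.1⟩)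
      ?_ ?_ ?_ ?_ ?_
    · rintro ⟨l, m⟩ hp
      simp only [Finset.mem_sigma, Finset.mem_range, Nat.lt_succ_iff] at hp
      obtain ⟨hl, hm⟩ := hp
      have h2m : 2 * m ≤ l := by omega
      simp only [Finset.mem_filter, Finset.mem_sigma, Finset.mem_range, Nat.lt_succ_iff]
      refine ⟨⟨?_, ?_⟩, ?_⟩ <;> omega
    · rintro ⟨m, l⟩ hp
      simp only [Finset.mem_filter, Finset.mem_sigma, Finset.mem_range, Nat.lt_succ_iff] at hp
      simp only [Finset.mem_sigma, Finset.mem_range, Nat.lt_succ_iff]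
      constructor <;> omega
    · rintro ⟨l, m⟩ hp
      simp only [Finset.mem_sigma, Finset.mem_range, Nat.lt_succ_iff] at hp
      have h2m : 2 * m ≤ l := by omega
      simp only
      congr 1 <;> omega
    · rintro ⟨m, l⟩ hp
      simp only
      congr 1 <;> omega
    · rintro ⟨l, m⟩ hp
      simp only [Finset.mem_sigma, Finset.mem_range, Nat.lt_succ_iff] at hp
      have h2m : 2 * m ≤ l := by omega
      have h1 : k + 1 - 2 * m - (l - 2 * m) = k + 1 - l := by omega
      rw [h1]
  · rintro ⟨m, l⟩ hp hne
    simp only [Finset.mem_sigma, Finset.mem_range, Nat.lt_succ_iff] at hp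
    by_contra hlt
    dsimp only at hlt
    apply hne
    dsimp only
    have : k + 1 - 2 * m - l = 0 ∨ k + 1 - 2 * m - l = 1 := by omega
    rcases this with h | h <;> rw [h]
    · rw [hX0, smul_zero]
    · rw [hX1, smul_zero]
end

section
/- For integers p, q ≥ 2 and a real number c, set K(p, q) = ∑_{r=2}^{min(p,q)} r · binom(p, r) · binom(q, r) · c^{p+q−2r}. Then for all integers k, j ≥ 2 and every real c: ∑_{a=0}^{k−2} ∑_{b=0}^{j−2} binom(k, a) · binom(j, b) · (−c)^{a+b} · K(k−a, j−b) = k if k = j, and = 0 if k ≠ j. -/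
open Finset

/-- The limiting covariance `K(p,q) = Cov(X_p, X_q)` of the fluctuations of the central
characters under Schur-Weyl measures of parameters `α = 1/2` and `c`. -/
noncomputable def swCov (c : ℝ) (p q : ℕ) : ℝ :=
  ∑ r ∈ Finset.Icc 2 (min p q), (r : ℝ) * (p.choose r : ℝ) * (q.choose r : ℝ) * c ^ (p + q - 2 * r)

lemma trinom (k r a : ℕ) (hr : r ≤ k) :
    k.choose a * (k - a).choose r = k.choose r * (k - r).choose a := by
  rcases le_or_gt (a + r) k with h | h
  · have e1 := Nat.choose_mul (n := k) (Nat.le_add_right a r)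
    have e2 := Nat.choose_mul (n := k) (Nat.le_add_left r a)
    simp only [Nat.add_sub_cancel_left, Nat.add_sub_cancel] at e1 e2
    have hsymm : (a + r).choose a = (a + r).choose r := by
      rw [← Nat.choose_symm (Nat.le_add_right a r), Nat.add_sub_cancel_left]
    rw [← e1, ← e2, hsymm]
  · have hR : (k - r).choose a = 0 := Nat.choose_eq_zero_of_lt (by omega)
    rcases le_or_gt a k with ha | ha
    · have hL : (k - a).choose r = 0 := Nat.choose_eq_zero_of_lt (by omega)
      rw [hL, hR, Nat.mul_zero, Nat.mul_zero]
    · have hL : k.choose a = 0 := Nat.choose_eq_zero_of_lt ha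
      rw [hL, hR, Nat.zero_mul, Nat.mul_zero]

lemma aux_sum (c : ℝ) (k r : ℕ) (hk : 2 ≤ k) (hr : 2 ≤ r) :
    ∑ a ∈ range (k - 1), (k.choose a : ℝ) * (-c) ^ a * (((k - a).choose r : ℝ) * c ^ (k - a - r))
      = if r = k then 1 else 0 := by
  rcases le_or_gt r k with hrk | hrk
  · have step1 : ∀ a ∈ range (k - 1),
        (k.choose a : ℝ) * (-c) ^ a * (((k - a).choose r : ℝ) * c ^ (k - a - r))
          = (k.choose r : ℝ) * (((k - r).choose a : ℝ) * (-c) ^ a * c ^ (k - r - a)) := by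
      intro a _
      have h1 : ((k.choose a : ℝ)) * (((k - a).choose r : ℝ)) =
          (k.choose r : ℝ) * ((k - r).choose a : ℝ) := by
        exact_mod_cast congrArg (Nat.cast : ℕ → ℝ) (trinom k r a hrk)
      have h2 : k - a - r = k - r - a := by omega
      rw [h2]; linear_combination ((-c) ^ a * c ^ (k - r - a)) * h1
    rw [Finset.sum_congr rfl step1, ← Finset.mul_sum]
    have hsub : range (k - r + 1) ⊆ range (k - 1) := by
      apply Finset.range_subset_range.mpr; omega
    have htrunc : ∑ a ∈ range (k - 1), ((k - r).choose a : ℝ) * (-c) ^ a * c ^ (k - r - a)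
        = ∑ a ∈ range (k - r + 1), ((k - r).choose a : ℝ) * (-c) ^ a * c ^ (k - r - a) := by
      refine (Finset.sum_subset hsub ?_).symm
      intro a _ ha
      have : k - r < a := by
        simp only [Finset.mem_range, not_lt] at ha; omega
      rw [Nat.choose_eq_zero_of_lt this]; simp
    rw [htrunc]
    have hbin : ∑ a ∈ range (k - r + 1), ((k - r).choose a : ℝ) * (-c) ^ a * c ^ (k - r - a)
        = (-c + c) ^ (k - r) := by
      rw [add_pow]
      exact Finset.sum_congr rfl fun a _ => by ring
    rw [hbin]
    have : (-c + c) = (0 : ℝ) := by ring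
    rw [this, zero_pow_eq]
    rcases eq_or_lt_of_le hrk with h | h
    · simp [h]
    · have h1 : ¬ (k - r = 0) := by omega
      have h2 : ¬ (r = k) := by omega
      simp [h1, h2]
  · have : ∀ a ∈ range (k - 1),
        (k.choose a : ℝ) * (-c) ^ a * (((k - a).choose r : ℝ) * c ^ (k - a - r)) = 0 := by
      intro a _
      have : (k - a).choose r = 0 := Nat.choose_eq_zero_of_lt (by omega)
      rw [this]; simp
    rw [Finset.sum_congr rfl this, Finset.sum_const, smul_zero]
    have : ¬ (r = k) := by omega
    simp [this]

theorem stmt_19 (k j : ℕ) (hk : 2 ≤ k) (hj : 2 ≤ j) (c : ℝ) :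
    ∑ a ∈ range (k - 1), ∑ b ∈ range (j - 1),
      (k.choose a : ℝ) * (j.choose b : ℝ) * (-c) ^ (a + b) * swCov c (k - a) (j - b)
    = if k = j then (k : ℝ) else 0 := by
  set M := max k j with hM
  have hcov : ∀ a ∈ range (k - 1), ∀ b ∈ range (j - 1),
      swCov c (k - a) (j - b) = ∑ r ∈ Icc 2 M,
        (r : ℝ) * (((k - a).choose r : ℝ) * c ^ (k - a - r))
          * (((j - b).choose r : ℝ) * c ^ (j - b - r)) := by
    intro a _ b _
    unfold swCov
    have hsub : Icc 2 (min (k - a) (j - b)) ⊆ Icc 2 M :=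
      Finset.Icc_subset_Icc le_rfl (le_trans (min_le_left _ _)
        (le_trans (Nat.sub_le k a) (le_max_left k j)))
    refine (Finset.sum_congr rfl ?_).trans (Finset.sum_subset hsub ?_)
    · intro r hr
      simp only [Finset.mem_Icc, le_min_iff] at hr
      have he : (k - a) + (j - b) - 2 * r = (k - a - r) + (j - b - r) := by omega
      rw [he, pow_add]; ring
    · intro r hr hr'
      simp only [Finset.mem_Icc] at hr hr'
      have : k - a < r ∨ j - b < r := by omega
      rcases this with h | h
      · rw [Nat.choose_eq_zero_of_lt h]; simp
      · rw [Nat.choose_eq_zero_of_lt h]; simp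
  calc
    ∑ a ∈ range (k - 1), ∑ b ∈ range (j - 1),
        (k.choose a : ℝ) * (j.choose b : ℝ) * (-c) ^ (a + b) * swCov c (k - a) (j - b)
      = ∑ r ∈ Icc 2 M, (r : ℝ)
          * (∑ a ∈ range (k - 1),
              (k.choose a : ℝ) * (-c) ^ a * (((k - a).choose r : ℝ) * c ^ (k - a - r)))
          * (∑ b ∈ range (j - 1),
              (j.choose b : ℝ) * (-c) ^ b * (((j - b).choose r : ℝ) * c ^ (j - b - r))) := by
        have stepA : ∀ a ∈ range (k - 1), ∀ b ∈ range (j - 1),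
            (k.choose a : ℝ) * (j.choose b : ℝ) * (-c) ^ (a + b) * swCov c (k - a) (j - b)
              = ∑ r ∈ Icc 2 M,
                (r : ℝ) * ((k.choose a : ℝ) * (-c) ^ a * (((k - a).choose r : ℝ) * c ^ (k - a - r)))
                  * ((j.choose b : ℝ) * (-c) ^ b * (((j - b).choose r : ℝ) * c ^ (j - b - r))) := by
          intro a ha b hb
          rw [hcov a ha b hb, Finset.mul_sum]
          refine Finset.sum_congr rfl fun r _ => ?_
          rw [pow_add]; ring
        rw [Finset.sum_congr rfl fun a ha => Finset.sum_congr rfl (stepA a ha)]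
        refine ((Finset.sum_congr rfl fun a _ => Finset.sum_comm).trans
          Finset.sum_comm).trans ?_
        refine Finset.sum_congr rfl fun r _ => ?_
        simp only [Finset.mul_sum, Finset.sum_mul]
        refine Finset.sum_comm.trans ?_
        refine Finset.sum_congr rfl fun b _ => Finset.sum_congr rfl fun a _ => by ring
    _ = ∑ r ∈ Icc 2 M, (r : ℝ) * (if r = k then 1 else 0) * (if r = j then 1 else 0) := by
        refine Finset.sum_congr rfl fun r hr => ?_
        simp only [Finset.mem_Icc] at hr
        rw [aux_sum c k r hk hr.1, aux_sum c j r hj hr.1]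
    _ = if k = j then (k : ℝ) else 0 := by
        by_cases hkj : k = j
        · subst hkj
          have hkin : k ∈ Icc 2 M := by
            simp only [Finset.mem_Icc]; exact ⟨hk, le_max_left _ _⟩
          have hterm : ∀ r ∈ Icc 2 M,
              (r : ℝ) * (if r = k then 1 else 0) * (if r = k then 1 else 0)
                = if r = k then (k : ℝ) else 0 := by
            intro r _
            by_cases h : r = k
            · simp [h]
            · simp [h]
          rw [Finset.sum_congr rfl hterm, Finset.sum_ite_eq' (Icc 2 M) k fun _ => (k : ℝ),
            if_pos hkin, if_pos rfl]
        · rw [if_neg hkj]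
          refine Finset.sum_eq_zero fun r _ => ?_
          by_cases h1 : r = k
          · have : ¬ (r = j) := by omega
            simp [this]
          · simp [h1]
end
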